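/- arXiv:2302.10165 — 2 statements merged into one kernel-verified Lean document; each statement's English description precedes it below -/
import Mathlib

section
/- Consider a system of N fermionic modes realized on (ℂ²)^{⊗N} via the Jordan–Wigner operators, and let A ⊆ [N] be a subset of L modes. Let H be a 2^N × 2^N Hermitian matrix whose spectrum has non-degenerate gaps, with orthonormal eigenbasis {|j⟩}; let |φ⟩ be a unit vector, c_j := ⟨j|φ⟩, D_eff := (Σ_j |c_j|⁴)^{−1}, ρ(t) := e^{−iHt}|φ⟩⟨φ|e^{iHt}, and ρ̄ := Σ_j |c_j|² |j⟩⟨j|. Then limsup_{τ→∞} (1/τ) ∫₀^τ ‖ρ(t)_A − ρ̄_A‖₂² dt ≤ 2^L / D_eff, where ‖·‖₂ is the Frobenius (Hilbert–Schmidt) norm. -/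
open MeasureTheory ProbabilityTheory Matrix Finset
open scoped Matrix ComplexOrder Classical

noncomputable section

/-- The Hilbert space basis of `N` qubits is indexed by `Fin N → Bool`. -/
abbrev QOp (N : ℕ) := Matrix (Fin N → Bool) (Fin N → Bool) ℂ

/-- Jordan–Wigner annihilation operator `a_j = Z^{⊗(j-1)} ⊗ |0⟩⟨1| ⊗ I`. -/
def aOp (N : ℕ) (j : Fin N) : QOp N := fun x y =>
  if x j = false ∧ y j = true ∧ ∀ i, i ≠ j → x i = y i then
    ∏ i ∈ Finset.univ.filter (fun i => i < j), (if y i then (-1 : ℂ) else 1)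
  else 0

/-- The vacuum state `|0…0⟩`. -/
def vac (N : ℕ) : (Fin N → Bool) → ℂ := fun x => if x = fun _ => false then 1 else 0

/-- `|φ_n⟩ = a_1† a_2† ⋯ a_n† |0⟩`. -/
def phiState (N n : ℕ) : (Fin N → Bool) → ℂ :=
  ((((List.finRange N).filter (fun j => decide (j.val < n))).map
    (fun j => (aOp N j)ᴴ)).prod) *ᵥ vac N

/-- Rank-one projector `|v⟩⟨v|`. -/
def outer (N : ℕ) (v : (Fin N → Bool) → ℂ) : QOp N := Matrix.vecMulVec v (star v)

/-- `H_SYK2 = Σ_{j,k} h_{jk} a_j† a_k`. -/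
def HSYK2 (N : ℕ) (h : Matrix (Fin N) (Fin N) ℂ) : QOp N :=
  ∑ j, ∑ k, h j k • ((aOp N j)ᴴ * aOp N k)

instance matrixMeasurableSpace {m n α : Type*} [MeasurableSpace α] :
    MeasurableSpace (Matrix m n α) := MeasurableSpace.pi

/-- The GUE measure on `N × N` complex matrices. -/
def gueMeasure (N : ℕ) : Measure (Matrix (Fin N) (Fin N) ℂ) :=
  Measure.map
    (fun p : (Fin N → ℝ) × (Fin N → Fin N → ℝ) × (Fin N → Fin N → ℝ) =>
      Matrix.of fun j k =>
        if j = k then (p.1 j : ℂ)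
        else if j < k then (p.2.1 j k : ℂ) + (p.2.2 j k : ℂ) * Complex.I
        else (p.2.1 k j : ℂ) - (p.2.2 k j : ℂ) * Complex.I)
    ((Measure.pi fun _ => gaussianReal 0 1).prod
      ((Measure.pi fun _ => Measure.pi fun _ => gaussianReal 0 (1/2)).prod
        (Measure.pi fun _ => Measure.pi fun _ => gaussianReal 0 (1/2))))

/-- Von Neumann entropy `S(ρ) = -tr(ρ ln ρ)` via eigenvalues (0 for non-Hermitian junk). -/
def vnEntropy {m : Type*} [Fintype m] [DecidableEq m] (ρ : Matrix m m ℂ) : ℝ :=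
  if hρ : ρ.IsHermitian then -∑ i, hρ.eigenvalues i * Real.log (hρ.eigenvalues i) else 0

/-- Rényi-2 entropy `S₂(ρ) = -ln tr(ρ²)`. -/
def renyi2 {m : Type*} [Fintype m] (ρ : Matrix m m ℂ) : ℝ := -Real.log ((ρ * ρ).trace.re)

/-- Rényi-α entropy. -/
def renyiEntropy {m : Type*} [Fintype m] [DecidableEq m] (α : ℝ) (ρ : Matrix m m ℂ) : ℝ :=
  if hρ : ρ.IsHermitian then
    if α = 1 then -∑ i, hρ.eigenvalues i * Real.log (hρ.eigenvalues i)
    else (1 - α)⁻¹ * Real.log (∑ i, hρ.eigenvalues i ^ α)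
  else 0

/-- Binary entropy function. -/
def binEntropy (x : ℝ) : ℝ := -x * Real.log x - (1 - x) * Real.log (1 - x)

/-- All eigenvalues (roots of the characteristic polynomial, with multiplicity) are distinct. -/
def NondegSpectrum {m : Type*} [Fintype m] [DecidableEq m] (M : Matrix m m ℂ) : Prop :=
  M.charpoly.roots.Nodup

/-- The spectrum has non-degenerate gaps. -/
def NondegGaps {m : Type*} [Fintype m] [DecidableEq m] (M : Matrix m m ℂ) : Prop :=
  M.charpoly.roots.Nodup ∧
  ∀ a ∈ M.charpoly.roots, ∀ b ∈ M.charpoly.roots, ∀ c ∈ M.charpoly.roots,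
    ∀ d ∈ M.charpoly.roots, a ≠ b → c ≠ d → a - b = c - d → a = c ∧ b = d

/-- The Jordan–Wigner image on modes `A` of the matrix unit `|y⟩⟨x|` of an `L`-mode system:
`(∏_{k : y_k = 1, increasing} a_{i_k}†) (∏_k a_{i_k} a_{i_k}†) (∏_{k : x_k = 1, decreasing} a_{i_k})`
where `i_1 < ⋯ < i_L` enumerates `A`. -/
def hatUnit (N L : ℕ) (ι : Fin L → Fin N) (y x : Fin L → Bool) : QOp N :=
  ((((List.finRange L).filter (fun k => y k)).map (fun k => (aOp N (ι k))ᴴ)).prod) *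
  (((List.finRange L).map (fun k => aOp N (ι k) * (aOp N (ι k))ᴴ)).prod) *
  (((((List.finRange L).filter (fun k => x k)).map (fun k => aOp N (ι k))).reverse).prod)

/-- The fermionic reduced density matrix of `ρ` on the set `A` of `L` modes, i.e. the unique
`2^L × 2^L` matrix with `tr(ρ_A X) = tr(ρ X̂)` for all polynomials `X` in the `L`-mode
creation/annihilation operators, `X̂` being the corresponding polynomial in `{a_j, a_j†}_{j ∈ A}`
(modes taken in increasing order). -/
def fermRDM (N L : ℕ) (A : Finset (Fin N)) (hA : A.card = L) (ρ : QOp N) :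
    Matrix (Fin L → Bool) (Fin L → Bool) ℂ :=
  fun x y => (ρ * hatUnit N L (fun k => A.orderEmbOfFin hA k) y x).trace

/-- Time evolution `e^{-iHt} v`. -/
def evolve (N : ℕ) (H : QOp N) (t : ℝ) (v : (Fin N → Bool) → ℂ) : (Fin N → Bool) → ℂ :=
  NormedSpace.exp ((-(t : ℂ) * Complex.I) • H) *ᵥ v

/-- Qubit partial trace onto the qubits in `A`. -/
def ptrace {N : ℕ} (A : Finset (Fin N)) (ρ : QOp N) :
    Matrix ({i // i ∈ A} → Bool) ({i // i ∈ A} → Bool) ℂ :=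
  fun x y => ∑ z : {i : Fin N // i ∉ A} → Bool,
    ρ (fun i => if h : i ∈ A then x ⟨i, h⟩ else z ⟨i, h⟩)
      (fun i => if h : i ∈ A then y ⟨i, h⟩ else z ⟨i, h⟩)


/-- Squared Frobenius (Hilbert–Schmidt) norm. -/
def frobSq {m : Type*} [Fintype m] (M : Matrix m m ℂ) : ℝ :=
  ∑ x, ∑ y, ‖M x y‖ ^ 2

/-- A matrix which maps basis states to ± basis states, with domain condition `S`
and state map `g`. -/
def MonoShape {N : ℕ} (M : QOp N) (S : (Fin N → Bool) → Prop)
    (g : (Fin N → Bool) → (Fin N → Bool)) : Prop :=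
  ∃ s : (Fin N → Bool) → ℂ, (∀ w, ‖s w‖ = 1) ∧
    ∀ u w, M u w = if S w ∧ u = g w then s w else 0

lemma monoShape_congr {N : ℕ} {M : QOp N} {S S' : (Fin N → Bool) → Prop}
    {g g' : (Fin N → Bool) → (Fin N → Bool)} (hS : ∀ w, S w ↔ S' w)
    (hg : ∀ w, S w → g w = g' w) (h : MonoShape M S g) : MonoShape M S' g' := by
  obtain ⟨s, hs1, hs2⟩ := h
  refine ⟨fun w => if S w then s w else 1, fun w => ?_, fun u w => ?_⟩
  · by_cases hw : S w <;> simp [hw, hs1]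
  · rw [hs2 u w]
    by_cases hw : S w
    · simp only [hw, if_true, (hS w).mp hw, hg w hw, true_and]
    · have hw' : ¬ S' w := fun h' => hw ((hS w).mpr h')
      simp [hw, hw']

lemma monoShape_one {N : ℕ} : MonoShape (1 : QOp N) (fun _ => True) id := by
  refine ⟨fun _ => 1, fun _ => by simp, fun u w => ?_⟩
  simp [Matrix.one_apply, eq_comm]

lemma monoShape_mul {N : ℕ} {M₁ M₂ : QOp N} {S₁ S₂ : (Fin N → Bool) → Prop}
    {g₁ g₂ : (Fin N → Bool) → (Fin N → Bool)}
    (h₁ : MonoShape M₁ S₁ g₁) (h₂ : MonoShape M₂ S₂ g₂) :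
    MonoShape (M₁ * M₂) (fun w => S₂ w ∧ S₁ (g₂ w)) (g₁ ∘ g₂) := by
  obtain ⟨s₁, hs₁, hM₁⟩ := h₁
  obtain ⟨s₂, hs₂, hM₂⟩ := h₂
  refine ⟨fun w => s₁ (g₂ w) * s₂ w, fun w => by rw [show ‖(fun w => s₁ (g₂ w) * s₂ w) w‖ = ‖s₁ (g₂ w)‖ * ‖s₂ w‖ from norm_mul _ _]; rw [hs₁, hs₂]; ring,
    fun u w => ?_⟩
  rw [Matrix.mul_apply]
  by_cases hw : S₂ w
  · rw [Finset.sum_eq_single (g₂ w)]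
    · rw [hM₁, hM₂]
      simp only [hw, and_true, if_true, true_and, Function.comp_apply, and_self]
      split_ifs with h1 <;> simp
    · intro z _ hz
      rw [hM₂, if_neg, mul_zero]
      exact fun hc => hz hc.2
    · simp
  · simp only [hw, false_and, if_false]
    apply Finset.sum_eq_zero
    intro z _
    rw [hM₂]
    by_cases h : z = g₂ w <;> simp [hw]

lemma monoShape_aOp {N : ℕ} (j : Fin N) :
    MonoShape (aOp N j) (fun w => w j = true) (fun w => Function.update w j false) := by
  refine ⟨fun w => ∏ i ∈ Finset.univ.filter (fun i => i < j), (if w i then (-1 : ℂ) else 1),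
    fun w => ?_, fun u w => ?_⟩
  · rw [norm_prod]
    apply Finset.prod_eq_one
    intro i _
    split <;> simp
  · rw [aOp]
    congr 1
    · simp only [eq_iff_iff]
      constructor
      · rintro ⟨h1, h2, h3⟩
        refine ⟨h2, ?_⟩
        funext i
        by_cases hi : i = j
        · subst hi; simp [h1]
        · simp [Function.update_of_ne hi, h3 i hi]
      · rintro ⟨h2, rfl⟩
        refine ⟨by simp, h2, fun i hi => by simp [Function.update_of_ne hi]⟩

lemma monoShape_aOpH {N : ℕ} (j : Fin N) :
    MonoShape ((aOp N j)ᴴ) (fun w => w j = false) (fun w => Function.update w j true) := by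
  refine ⟨fun w => ∏ i ∈ Finset.univ.filter (fun i => i < j), (if w i then (-1 : ℂ) else 1),
    fun w => ?_, fun u w => ?_⟩
  · rw [norm_prod]
    apply Finset.prod_eq_one
    intro i _
    split <;> simp
  · rw [Matrix.conjTranspose_apply, aOp]
    have : (w j = false ∧ u j = true ∧ ∀ i, i ≠ j → w i = u i) ↔
        (w j = false ∧ u = Function.update w j true) := by
      constructor
      · rintro ⟨h1, h2, h3⟩
        refine ⟨h1, ?_⟩
        funext i
        by_cases hi : i = j
        · subst hi; simp [h2]
        · simp [Function.update_of_ne hi, (h3 i hi).symm]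
      · rintro ⟨h1, rfl⟩
        exact ⟨h1, by simp, fun i hi => by simp [Function.update_of_ne hi]⟩
    split_ifs with h h' h'
    · rw [star_prod]
      apply Finset.prod_congr rfl
      intro i hi
      simp only [Finset.mem_filter] at hi
      have hij : i ≠ j := Fin.ne_of_lt hi.2
      obtain ⟨-, rfl⟩ := this.mp h
      rw [Function.update_of_ne hij]
      split <;> simp
    · exact absurd (this.mp h) h'
    · exact absurd (this.mpr h') h
    · exact star_zero _

lemma monoShape_projOp {N : ℕ} (j : Fin N) :
    MonoShape (aOp N j * (aOp N j)ᴴ) (fun w => w j = false)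
      (fun w => Function.update w j false) := by
  have := monoShape_mul (monoShape_aOp j) (monoShape_aOpH j)
  refine monoShape_congr (fun w => ?_) (fun w hw => ?_) this
  · simp
  · funext i
    by_cases hi : i = j
    · subst hi; simp
    · simp [Function.update_of_ne hi]

/-- Product over a list of distinct modes of single-mode monomial operators. -/
lemma monoShape_list {N : ℕ} (f : Fin N → QOp N) (bS bG : Bool)
    (h : ∀ j, MonoShape (f j) (fun w => w j = bS) (fun w => Function.update w j bG)) :
    ∀ l : List (Fin N), l.Nodup →
      MonoShape ((l.map f).prod) (fun w => ∀ j ∈ l, w j = bS)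
        (fun w i => if i ∈ l then bG else w i) := by
  intro l
  induction l with
  | nil =>
    intro _
    refine monoShape_congr (fun w => by simp) (fun w _ => by funext i; simp) monoShape_one
  | cons j t ih =>
    intro hnd
    rw [List.nodup_cons] at hnd
    have hmul := monoShape_mul (h j) (ih hnd.2)
    rw [List.map_cons, List.prod_cons]
    refine monoShape_congr (fun w => ?_) (fun w hw => ?_) hmul
    · simp only [List.mem_cons]
      constructor
      · rintro ⟨h1, h2⟩
        simp only [if_neg (fun hc => hnd.1 hc)] at h2
        rintro i (rfl | hi)
        · exact h2
        · exact h1 i hi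
      · rintro h1
        refine ⟨fun i hi => h1 i (Or.inr hi), ?_⟩
        rw [if_neg (fun hc => hnd.1 hc)]
        exact h1 j (Or.inl rfl)
    · funext i
      simp only [Function.comp]
      by_cases hij : i = j
      · subst hij; simp
      · rw [Function.update_of_ne hij]
        simp [List.mem_cons, hij]

/-- occupation pattern `x` on the modes `ι`. -/
def patt {N L : ℕ} (ι : Fin L → Fin N) (x : Fin L → Bool) (w : Fin N → Bool) : Prop :=
  ∀ k, w (ι k) = x k

/-- overwrite `w` with pattern `y` on the modes `ι`. -/
def ovw {N L : ℕ} (ι : Fin L → Fin N) (y : Fin L → Bool) (w : Fin N → Bool) :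
    Fin N → Bool :=
  fun i => if h : ∃ k, ι k = i then y h.choose else w i

section ovw
variable {N L : ℕ} {ι : Fin L → Fin N} {x y : Fin L → Bool} {w : Fin N → Bool}

lemma ovw_apply (hι : Function.Injective ι) (k : Fin L) : ovw ι y w (ι k) = y k := by
  have h : ∃ k', ι k' = ι k := ⟨k, rfl⟩
  rw [ovw, dif_pos h, hι h.choose_spec]

lemma ovw_apply_not {i : Fin N} (hi : ∀ k, ι k ≠ i) : ovw ι y w i = w i := by
  rw [ovw, dif_neg]
  rintro ⟨k, hk⟩
  exact hi k hk

lemma patt_ovw (hι : Function.Injective ι) : patt ι y (ovw ι y w) :=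
  fun k => ovw_apply hι k

lemma ovw_ovw (hι : Function.Injective ι) (h : patt ι x w) :
    ovw ι x (ovw ι y w) = w := by
  funext i
  by_cases hi : ∃ k, ι k = i
  · obtain ⟨k, rfl⟩ := hi
    rw [ovw_apply hι, h k]
  · push_neg at hi
    rw [ovw_apply_not hi, ovw_apply_not hi]

end ovw

lemma monoShape_hatUnit {N L : ℕ} (ι : Fin L → Fin N) (hι : Function.Injective ι)
    (y x : Fin L → Bool) :
    MonoShape (hatUnit N L ι y x) (patt ι x) (ovw ι y) := by
  classical
  set l₁ : List (Fin N) := (((List.finRange L).filter (fun k => y k)).map ι) with hl₁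
  set l₂ : List (Fin N) := ((List.finRange L).map ι) with hl₂
  set l₃ : List (Fin N) := ((((List.finRange L).filter (fun k => x k)).reverse).map ι) with hl₃
  have hnd : ∀ l : List (Fin L), l.Nodup → (l.map ι).Nodup :=
    fun l hl => hl.map hι
  have hnd₁ : l₁.Nodup := hnd _ ((List.nodup_finRange L).filter _)
  have hnd₂ : l₂.Nodup := hnd _ (List.nodup_finRange L)
  have hnd₃ : l₃.Nodup := hnd _ (List.nodup_reverse.mpr ((List.nodup_finRange L).filter _))
  have hm₁ : ∀ i, i ∈ l₁ ↔ ∃ k, ι k = i ∧ y k = true := by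
    intro i
    simp [hl₁, List.mem_map, List.mem_filter, and_comm]
  have hm₂ : ∀ i, i ∈ l₂ ↔ ∃ k, ι k = i := by
    intro i; simp [hl₂, List.mem_map]
  have hm₃ : ∀ i, i ∈ l₃ ↔ ∃ k, ι k = i ∧ x k = true := by
    intro i
    simp [hl₃, List.mem_map, List.mem_filter, and_comm]
  have h₁ : MonoShape ((l₁.map (fun j => (aOp N j)ᴴ)).prod)
      (fun w => ∀ j ∈ l₁, w j = false) (fun w i => if i ∈ l₁ then true else w i) :=
    monoShape_list _ false true (fun j => monoShape_aOpH j) l₁ hnd₁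
  have h₂ : MonoShape ((l₂.map (fun j => aOp N j * (aOp N j)ᴴ)).prod)
      (fun w => ∀ j ∈ l₂, w j = false) (fun w i => if i ∈ l₂ then false else w i) :=
    monoShape_list _ false false (fun j => monoShape_projOp j) l₂ hnd₂
  have h₃ : MonoShape ((l₃.map (fun j => aOp N j)).prod)
      (fun w => ∀ j ∈ l₃, w j = true) (fun w i => if i ∈ l₃ then false else w i) :=
    monoShape_list _ true false (fun j => monoShape_aOp j) l₃ hnd₃
  have hcomp := monoShape_mul (monoShape_mul h₁ h₂) h₃
  have hrw : hatUnit N L ι y x =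
      ((l₁.map (fun j => (aOp N j)ᴴ)).prod) * ((l₂.map (fun j => aOp N j * (aOp N j)ᴴ)).prod) *
        ((l₃.map (fun j => aOp N j)).prod) := by
    rw [hatUnit, hl₁, hl₂, hl₃, List.map_map, List.map_map, List.map_map,
      ← List.map_reverse]
    rfl
  rw [← hrw] at hcomp
  refine monoShape_congr (fun w => ?_) (fun w hw => ?_) hcomp
  · -- domain condition
    simp only [patt]
    constructor
    · rintro ⟨hw3, hw2, -⟩
      intro k
      cases hxk : x k
      · have := hw2 (ι k) ((hm₂ _).mpr ⟨k, rfl⟩)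
        rw [if_neg] at this
        · exact this
        · rw [hm₃]
          rintro ⟨k', hk', hx'⟩
          rw [hι hk'] at hx'
          rw [hxk] at hx'
          exact Bool.false_ne_true hx'
      · exact hw3 (ι k) ((hm₃ _).mpr ⟨k, rfl, hxk⟩)
    · intro hp
      refine ⟨?_, ?_, ?_⟩
      · intro j hj
        obtain ⟨k, rfl, hk⟩ := (hm₃ j).mp hj
        rw [hp k, hk]
      · intro j hj
        obtain ⟨k, rfl⟩ := (hm₂ j).mp hj
        by_cases h3 : ι k ∈ l₃
        · rw [if_pos h3]
        · rw [if_neg h3]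
          obtain hxk := hp k
          cases hxk' : x k
          · rw [hxk, hxk']
          · exact absurd ((hm₃ _).mpr ⟨k, rfl, hxk'⟩) h3
      · intro j hj
        have hj2 : j ∈ l₂ := by
          obtain ⟨k, rfl, -⟩ := (hm₁ j).mp hj
          exact (hm₂ _).mpr ⟨k, rfl⟩
        rw [if_pos hj2]
  · -- map condition
    funext i
    simp only [Function.comp_apply]
    by_cases hi : ∃ k, ι k = i
    · obtain ⟨k, rfl⟩ := hi
      rw [ovw_apply hι]
      have h2 : ι k ∈ l₂ := (hm₂ _).mpr ⟨k, rfl⟩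
      rw [if_pos h2]
      by_cases h1 : ι k ∈ l₁
      · obtain ⟨k', hk', hy'⟩ := (hm₁ _).mp h1
        rw [hι hk'] at hy'
        rw [if_pos h1, hy']
      · rw [if_neg h1]
        cases hyk : y k
        · rfl
        · exact absurd ((hm₁ _).mpr ⟨k, rfl, hyk⟩) h1
    · push_neg at hi
      have n1 : i ∉ l₁ := fun h => by obtain ⟨k, hk, -⟩ := (hm₁ i).mp h; exact hi k hk
      have n2 : i ∉ l₂ := fun h => by obtain ⟨k, hk⟩ := (hm₂ i).mp h; exact hi k hk
      have n3 : i ∉ l₃ := fun h => by obtain ⟨k, hk, -⟩ := (hm₃ i).mp h; exact hi k hk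
      rw [ovw_apply_not hi, if_neg n3, if_neg n2, if_neg n1]

/-- Two-sided representation of `hatUnit`. -/
lemma hatUnit_repr {N L : ℕ} (ι : Fin L → Fin N) (hι : Function.Injective ι)
    (y x : Fin L → Bool) :
    ∃ s : (Fin N → Bool) → ℂ, (∀ w, ‖s w‖ = 1) ∧
      (∀ u w, hatUnit N L ι y x u w = if patt ι x w ∧ u = ovw ι y w then s w else 0) ∧
      (∀ u w, hatUnit N L ι y x u w =
        if patt ι y u ∧ w = ovw ι x u then s (ovw ι x u) else 0) := by
  obtain ⟨s, hs, hM⟩ := monoShape_hatUnit ι hι y x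
  refine ⟨s, hs, hM, fun u w => ?_⟩
  rw [hM u w]
  by_cases h : patt ι y u ∧ w = ovw ι x u
  · obtain ⟨h1, rfl⟩ := h
    rw [if_pos ⟨patt_ovw hι, (ovw_ovw hι h1).symm⟩, if_pos ⟨h1, rfl⟩]
  · rw [if_neg h, if_neg]
    rintro ⟨h1, rfl⟩
    exact h ⟨patt_ovw hι, (ovw_ovw hι h1).symm⟩
-- chunk 3: orthonormal eigensystem
section Spectral

variable {N : ℕ}

/-- matrix whose columns are the vectors `v j`. -/
def Vmat (v : (Fin N → Bool) → ((Fin N → Bool) → ℂ)) : QOp N :=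
  Matrix.of fun i j => v j i

variable {v : (Fin N → Bool) → ((Fin N → Bool) → ℂ)} {H : QOp N} {E : (Fin N → Bool) → ℝ}

lemma Vmat_conjT_mul (horth : ∀ j j', star (v j) ⬝ᵥ v j' = if j = j' then (1 : ℂ) else 0) :
    (Vmat v)ᴴ * Vmat v = 1 := by
  ext j k
  rw [Matrix.mul_apply, Matrix.one_apply, ← horth j k]
  simp [Vmat, Matrix.conjTranspose_apply, dotProduct, mul_comm]

lemma Vmat_mul_conjT (horth : ∀ j j', star (v j) ⬝ᵥ v j' = if j = j' then (1 : ℂ) else 0) :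
    Vmat v * (Vmat v)ᴴ = 1 :=
  mul_eq_one_comm.mp (Vmat_conjT_mul horth)

lemma Vmat_isUnit (horth : ∀ j j', star (v j) ⬝ᵥ v j' = if j = j' then (1 : ℂ) else 0) :
    IsUnit (Vmat v) :=
  ⟨⟨Vmat v, (Vmat v)ᴴ, Vmat_mul_conjT horth, Vmat_conjT_mul horth⟩, rfl⟩

lemma Vmat_inv (horth : ∀ j j', star (v j) ⬝ᵥ v j' = if j = j' then (1 : ℂ) else 0) :
    (Vmat v)⁻¹ = (Vmat v)ᴴ :=
  Matrix.inv_eq_right_inv (Vmat_mul_conjT horth)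

lemma H_mul_Vmat (heig : ∀ j, H *ᵥ v j = (E j : ℂ) • v j) :
    H * Vmat v = Vmat v * Matrix.diagonal (fun j => (E j : ℂ)) := by
  ext i j
  have h1 : (H * Vmat v) i j = (H *ᵥ v j) i := by
    simp [Matrix.mul_apply, Matrix.mulVec, dotProduct, Vmat]
  rw [h1, heig j]
  simp only [Pi.smul_apply, smul_eq_mul, Matrix.mul_apply, Vmat, Matrix.of_apply,
    Matrix.diagonal_apply, mul_ite, mul_zero, Finset.sum_ite_eq, Finset.sum_ite_eq',
    Finset.mem_univ, if_true]
  ring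

lemma H_eq_conj (horth : ∀ j j', star (v j) ⬝ᵥ v j' = if j = j' then (1 : ℂ) else 0)
    (heig : ∀ j, H *ᵥ v j = (E j : ℂ) • v j) :
    H = Vmat v * Matrix.diagonal (fun j => (E j : ℂ)) * (Vmat v)ᴴ := by
  rw [← H_mul_Vmat heig, Matrix.mul_assoc, Vmat_mul_conjT horth, Matrix.mul_one]

lemma evolve_eq (horth : ∀ j j', star (v j) ⬝ᵥ v j' = if j = j' then (1 : ℂ) else 0)
    (heig : ∀ j, H *ᵥ v j = (E j : ℂ) • v j) (t : ℝ) (φ : (Fin N → Bool) → ℂ) :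
    evolve N H t φ = fun u => ∑ j,
      (Complex.exp ((-(t : ℂ) * Complex.I) * (E j : ℂ)) * (star (v j) ⬝ᵥ φ)) * v j u := by
  have hd : (-(t : ℂ) * Complex.I) • H =
      Vmat v * Matrix.diagonal (fun j => (-(t : ℂ) * Complex.I) * (E j : ℂ)) * (Vmat v)ᴴ := by
    rw [H_eq_conj horth heig, ← Matrix.smul_mul, ← Matrix.mul_smul, ← Matrix.diagonal_smul]
    congr 2
  have hexp : NormedSpace.exp ((-(t : ℂ) * Complex.I) • H) =
      Vmat v * Matrix.diagonal
        (fun j => Complex.exp ((-(t : ℂ) * Complex.I) * (E j : ℂ))) * (Vmat v)ᴴ := by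
    rw [hd, ← Vmat_inv horth, Matrix.exp_conj _ _ (Vmat_isUnit horth),
      Matrix.exp_diagonal, Vmat_inv horth]
    have hfun : (NormedSpace.exp fun j : Fin N → Bool => -(t : ℂ) * Complex.I * (E j : ℂ)) =
        fun j => Complex.exp (-(t : ℂ) * Complex.I * (E j : ℂ)) := by
      funext j
      rw [Pi.coe_exp, Complex.exp_eq_exp_ℂ]
    rw [hfun]
  rw [evolve, hexp]
  funext u
  rw [← Matrix.mulVec_mulVec, ← Matrix.mulVec_mulVec]
  simp only [Matrix.mulVec, dotProduct, Vmat, Matrix.of_apply, Matrix.diagonal_apply,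
    Matrix.conjTranspose_apply, Pi.star_apply, ite_mul, zero_mul, Finset.sum_ite_eq,
    Finset.mem_univ, if_true]
  exact Finset.sum_congr rfl fun j _ => by ring

lemma charpoly_H (horth : ∀ j j', star (v j) ⬝ᵥ v j' = if j = j' then (1 : ℂ) else 0)
    (heig : ∀ j, H *ᵥ v j = (E j : ℂ) • v j) :
    H.charpoly = ∏ j, (Polynomial.X - Polynomial.C ((E j : ℝ) : ℂ)) := by
  classical
  have hC : H.charpoly = (Matrix.diagonal (fun j : Fin N → Bool => (E j : ℂ))).charpoly := by
    set V := Vmat v with hV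
    set Dg := Matrix.diagonal (fun j : Fin N → Bool => (E j : ℂ)) with hDg
    have hVV1 : V * Vᴴ = 1 := Vmat_mul_conjT horth
    have hsc : Matrix.scalar (Fin N → Bool) (Polynomial.X : Polynomial ℂ) *
          ((Polynomial.C : ℂ →+* Polynomial ℂ).mapMatrix V) =
        ((Polynomial.C : ℂ →+* Polynomial ℂ).mapMatrix V) *
          Matrix.scalar (Fin N → Bool) (Polynomial.X : Polynomial ℂ) :=
      (Matrix.scalar_commute (Polynomial.X : Polynomial ℂ) (fun r' => Commute.all _ _) _).eq
    have hVVm : ((Polynomial.C : ℂ →+* Polynomial ℂ).mapMatrix V) *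
        ((Polynomial.C : ℂ →+* Polynomial ℂ).mapMatrix Vᴴ) = 1 := by
      rw [← _root_.map_mul, hVV1, _root_.map_one]
    have hcm : Matrix.charmatrix (V * Dg * Vᴴ) =
        ((Polynomial.C : ℂ →+* Polynomial ℂ).mapMatrix V) * Matrix.charmatrix Dg *
          ((Polynomial.C : ℂ →+* Polynomial ℂ).mapMatrix Vᴴ) := by
      rw [Matrix.charmatrix, Matrix.charmatrix, Matrix.mul_sub, Matrix.sub_mul]
      congr 1
      · rw [← hsc, Matrix.mul_assoc, hVVm]
        simp
      · rw [← _root_.map_mul, ← _root_.map_mul]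
    have hdet1 : ((Polynomial.C : ℂ →+* Polynomial ℂ).mapMatrix V).det *
        ((Polynomial.C : ℂ →+* Polynomial ℂ).mapMatrix Vᴴ).det = 1 := by
      rw [← Matrix.det_mul, hVVm, Matrix.det_one]
    have hHeq : H = V * Dg * Vᴴ := H_eq_conj horth heig
    rw [hHeq, Matrix.charpoly, Matrix.charpoly, hcm, Matrix.det_mul, Matrix.det_mul]
    calc ((Polynomial.C : ℂ →+* Polynomial ℂ).mapMatrix V).det * (Matrix.charmatrix Dg).det *
          ((Polynomial.C : ℂ →+* Polynomial ℂ).mapMatrix Vᴴ).det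
        = (Matrix.charmatrix Dg).det * (((Polynomial.C : ℂ →+* Polynomial ℂ).mapMatrix V).det *
            ((Polynomial.C : ℂ →+* Polynomial ℂ).mapMatrix Vᴴ).det) := by ring
      _ = (Matrix.charmatrix Dg).det := by rw [hdet1, mul_one]
  rw [hC, Matrix.charpoly]
  have hdd : Matrix.charmatrix (Matrix.diagonal (fun j : Fin N → Bool => (E j : ℂ))) =
      Matrix.diagonal (fun j => (Polynomial.X : Polynomial ℂ) - Polynomial.C (E j : ℂ)) := by
    ext i j
    by_cases h : i = j
    · subst h; simp
    · simp [Matrix.charmatrix_apply_ne _ _ _ h, Matrix.diagonal_apply_ne _ h]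
  rw [hdd, Matrix.det_diagonal]

lemma roots_charpoly_H (horth : ∀ j j', star (v j) ⬝ᵥ v j' = if j = j' then (1 : ℂ) else 0)
    (heig : ∀ j, H *ᵥ v j = (E j : ℂ) • v j) :
    H.charpoly.roots = Multiset.map (fun j => ((E j : ℝ) : ℂ)) Finset.univ.val := by
  rw [charpoly_H horth heig]
  have h0 : ∀ j : Fin N → Bool,
      (Polynomial.X - Polynomial.C ((E j : ℝ) : ℂ)) ≠ 0 := fun j => Polynomial.X_sub_C_ne_zero _
  rw [Finset.prod_eq_multiset_prod, Polynomial.roots_multiset_prod]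
  · have : ∀ m : Multiset (Fin N → Bool),
        (Multiset.map (fun j => Polynomial.X - Polynomial.C ((E j : ℝ) : ℂ)) m).bind
            Polynomial.roots =
          Multiset.map (fun j => ((E j : ℝ) : ℂ)) m := by
      intro m
      induction m using Multiset.induction with
      | empty => simp
      | cons a s ih => simp [ih, Polynomial.roots_X_sub_C]
    exact this _
  · simp only [Multiset.mem_map]
    rintro ⟨j, -, hj⟩
    exact h0 j hj

lemma E_injective (horth : ∀ j j', star (v j) ⬝ᵥ v j' = if j = j' then (1 : ℂ) else 0)
    (heig : ∀ j, H *ᵥ v j = (E j : ℂ) • v j) (hnd : H.charpoly.roots.Nodup) :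
    Function.Injective E := by
  have hr := roots_charpoly_H horth heig
  rw [hr] at hnd
  have hinj := Multiset.inj_on_of_nodup_map hnd
  intro j k hjk
  exact hinj j (Finset.mem_univ_val _) k (Finset.mem_univ_val _) (by rw [hjk])

lemma gaps_separate (horth : ∀ j j', star (v j) ⬝ᵥ v j' = if j = j' then (1 : ℂ) else 0)
    (heig : ∀ j, H *ᵥ v j = (E j : ℂ) • v j) (hgap : NondegGaps H) {j k j' k' : Fin N → Bool}
    (hjk : j ≠ k) (hjk' : j' ≠ k') (heq : E j - E k = E j' - E k') : j = j' ∧ k = k' := by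
  have hr := roots_charpoly_H horth heig
  have hEinj := E_injective horth heig hgap.1
  have hmem : ∀ j : Fin N → Bool, ((E j : ℝ) : ℂ) ∈ H.charpoly.roots := by
    intro j
    rw [hr, Multiset.mem_map]
    exact ⟨j, Finset.mem_univ_val _, rfl⟩
  have h1 : ((E j : ℝ) : ℂ) ≠ (E k : ℂ) := by
    simp only [ne_eq, Complex.ofReal_inj]
    exact fun h => hjk (hEinj h)
  have h2 : ((E j' : ℝ) : ℂ) ≠ (E k' : ℂ) := by
    simp only [ne_eq, Complex.ofReal_inj]
    exact fun h => hjk' (hEinj h)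
  have h3 : ((E j : ℝ) : ℂ) - (E k : ℂ) = (E j' : ℂ) - (E k' : ℂ) := by
    have := congrArg (fun r : ℝ => (r : ℂ)) heq
    push_cast at this ⊢
    exact this
  obtain ⟨ha, hb⟩ := hgap.2 _ (hmem j) _ (hmem k) _ (hmem j') _ (hmem k') h1 h2 h3
  exact ⟨hEinj (Complex.ofReal_inj.mp ha), hEinj (Complex.ofReal_inj.mp hb)⟩

end Spectral
-- chunk 4: generic small lemmas
section Aux

variable {D : Type*} [Fintype D] [DecidableEq D]

lemma trace_vecMulVec_mul (a b : D → ℂ) (C : Matrix D D ℂ) :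
    (Matrix.vecMulVec a b * C).trace = b ⬝ᵥ (C *ᵥ a) := by
  simp only [Matrix.trace, Matrix.diag, Matrix.mul_apply, Matrix.vecMulVec_apply, dotProduct,
    Matrix.mulVec]
  rw [Finset.sum_comm]
  exact Finset.sum_congr rfl fun w _ => by
    rw [Finset.mul_sum]
    exact Finset.sum_congr rfl fun u _ => by ring

lemma vecMulVec_mulVec (a b z : D → ℂ) :
    Matrix.vecMulVec a b *ᵥ z = (b ⬝ᵥ z) • a := by
  funext u
  simp only [Matrix.mulVec, dotProduct, Matrix.vecMulVec_apply, Pi.smul_apply, smul_eq_mul]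
  rw [Finset.sum_mul]
  exact Finset.sum_congr rfl fun w _ => by ring

lemma dot_conjTranspose (a b : D → ℂ) (M : Matrix D D ℂ) :
    star a ⬝ᵥ (Mᴴ *ᵥ b) = (starRingEnd ℂ) (star b ⬝ᵥ (M *ᵥ a)) := by
  simp only [dotProduct, Matrix.mulVec, Matrix.conjTranspose_apply, Pi.star_apply,
    _root_.map_sum, _root_.map_mul, Complex.star_def, Complex.conj_conj, Finset.mul_sum]
  rw [Finset.sum_comm]
  exact Finset.sum_congr rfl fun u _ => Finset.sum_congr rfl fun w _ => by ring

lemma trace_conjTranspose_mul (X Y : Matrix D D ℂ) :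
    (Xᴴ * Y).trace = ∑ u, ∑ w, (starRingEnd ℂ) (X w u) * Y w u := by
  simp only [Matrix.trace, Matrix.diag, Matrix.mul_apply, Matrix.conjTranspose_apply]
  rfl

end Aux

section AvgExp

lemma cexp_cont (ω : ℝ) : Continuous fun t : ℝ => Complex.exp (-(ω : ℂ) * Complex.I * t) :=
  Complex.continuous_exp.comp (continuous_const.mul Complex.continuous_ofReal)

lemma cexp_intervalIntegrable (ω a b : ℝ) :
    IntervalIntegrable (fun t : ℝ => Complex.exp (-(ω : ℂ) * Complex.I * t))
      MeasureTheory.volume a b :=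
  (cexp_cont ω).intervalIntegrable a b

lemma tendsto_avg_exp (ω : ℝ) :
    Filter.Tendsto
      (fun τ : ℝ => (1 / τ : ℂ) * ∫ t in (0:ℝ)..τ, Complex.exp (-(ω : ℂ) * Complex.I * t))
      Filter.atTop (nhds (if ω = 0 then 1 else 0)) := by
  by_cases hω : ω = 0
  · subst hω
    rw [if_pos rfl]
    apply Filter.Tendsto.congr' (f₁ := fun _ => (1 : ℂ))
    · filter_upwards [Filter.eventually_ge_atTop (1 : ℝ)] with τ hτ
      have hτ0 : (τ : ℂ) ≠ 0 := by
        simp only [ne_eq, Complex.ofReal_eq_zero]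
        linarith
      simp only [Complex.ofReal_zero, neg_zero, zero_mul, Complex.exp_zero,
        intervalIntegral.integral_const, sub_zero, Complex.real_smul, mul_one]
      field_simp
    · exact tendsto_const_nhds
  · rw [if_neg hω]
    have hc : (-(ω : ℂ) * Complex.I) ≠ 0 := by
      simp [Complex.ext_iff, hω]
    have hval : ∀ τ : ℝ, (∫ t in (0:ℝ)..τ, Complex.exp (-(ω : ℂ) * Complex.I * t)) =
        (Complex.exp (-(ω : ℂ) * Complex.I * τ) - 1) / (-(ω : ℂ) * Complex.I) := by
      intro τ
      rw [integral_exp_mul_complex hc]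
      norm_num
    apply squeeze_zero_norm' (a := fun τ => 2 / ‖-(ω : ℂ) * Complex.I‖ * τ⁻¹)
    · filter_upwards [Filter.eventually_ge_atTop (1 : ℝ)] with τ hτ
      rw [hval τ]
      have habs : ∀ r : ℝ, ‖Complex.exp (-(ω : ℂ) * Complex.I * r) - 1‖ ≤ 2 := by
        intro r
        refine le_trans (norm_sub_le _ _) ?_
        have h1 : ‖Complex.exp (-(ω : ℂ) * Complex.I * r)‖ = 1 := by
          rw [Complex.norm_exp]
          have : (-(ω : ℂ) * Complex.I * r).re = 0 := by
            simp [Complex.mul_re, Complex.mul_im]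
          rw [this, Real.exp_zero]
        rw [h1]
        norm_num
      have hτ0 : τ ≠ 0 := by linarith
      calc ‖(1/(τ:ℂ)) * ((Complex.exp (-(ω:ℂ)*Complex.I*τ) - 1) / (-(ω:ℂ)*Complex.I))‖
          = τ⁻¹ * (‖Complex.exp (-(ω:ℂ)*Complex.I*τ) - 1‖ /
              ‖-(ω:ℂ)*Complex.I‖) := by
            rw [norm_mul, norm_div, norm_div,
              norm_one, Complex.norm_real, Real.norm_eq_abs, abs_of_pos (by linarith : (0:ℝ) < τ), one_div]
        _ ≤ τ⁻¹ * (2 / ‖-(ω:ℂ)*Complex.I‖) := by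
            refine mul_le_mul_of_nonneg_left ?_ (by positivity)
            exact (div_le_div_iff_of_pos_right (norm_pos_iff.mpr hc)).mpr (habs τ)
        _ = 2 / ‖-(ω:ℂ)*Complex.I‖ * τ⁻¹ := by ring
    · have h2 : Filter.Tendsto (fun τ : ℝ => τ⁻¹) Filter.atTop (nhds 0) :=
        tendsto_inv_atTop_zero
      have := h2.const_mul (2 / ‖-(ω : ℂ) * Complex.I‖)
      simpa using this

end AvgExp
-- chunk 5: core bound
section Key

variable {N L : ℕ}

/-- row square-sums of a matrix. -/
def rrq (ρ : QOp N) (u : Fin N → Bool) : ℝ := ∑ w, Complex.normSq (ρ u w)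

/-- sum of `rrq` over a pattern class. -/
def Tpatt (ι : Fin L → Fin N) (ρ : QOp N) (z : Fin L → Bool) : ℝ :=
  ∑ u ∈ Finset.univ.filter (patt ι z), rrq ρ u

lemma rrq_nonneg (ρ : QOp N) (u : Fin N → Bool) : 0 ≤ rrq ρ u :=
  Finset.sum_nonneg fun _ _ => Complex.normSq_nonneg _

lemma Tpatt_nonneg (ι : Fin L → Fin N) (ρ : QOp N) (z : Fin L → Bool) : 0 ≤ Tpatt ι ρ z :=
  Finset.sum_nonneg fun _ _ => rrq_nonneg _ _

lemma hs_cauchy (X Y : QOp N) : ((Xᴴ * Y).trace).re ≤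
    Real.sqrt (∑ u, ∑ w, Complex.normSq (X u w)) *
      Real.sqrt (∑ u, ∑ w, Complex.normSq (Y u w)) := by
  rw [trace_conjTranspose_mul]
  have h1 : ((∑ u, ∑ w, (starRingEnd ℂ) (X w u) * Y w u)).re =
      ∑ u, ∑ w, ((starRingEnd ℂ) (X w u) * Y w u).re := by
    rw [Complex.re_sum]
    exact Finset.sum_congr rfl fun u _ => Complex.re_sum _ _
  rw [h1]
  have h2 : ∑ u, ∑ w, ((starRingEnd ℂ) (X w u) * Y w u).re ≤
      ∑ u, ∑ w, ‖X w u‖ * ‖Y w u‖ := by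
    refine Finset.sum_le_sum fun u _ => Finset.sum_le_sum fun w _ => ?_
    refine le_trans (Complex.re_le_norm _) (le_of_eq ?_)
    rw [norm_mul, Complex.norm_conj]
  refine le_trans h2 ?_
  have h3 : ∑ u, ∑ w, ‖X w u‖ * ‖Y w u‖ =
      ∑ p : (Fin N → Bool) × (Fin N → Bool), ‖X p.2 p.1‖ * ‖Y p.2 p.1‖ := by
    rw [← Finset.sum_product']
    rfl
  rw [h3]
  have h4 := Finset.sum_mul_sq_le_sq_mul_sq Finset.univ
    (fun p : (Fin N → Bool) × (Fin N → Bool) => ‖X p.2 p.1‖)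
    (fun p => ‖Y p.2 p.1‖)
  have h5 : 0 ≤ ∑ p : (Fin N → Bool) × (Fin N → Bool),
      ‖X p.2 p.1‖ * ‖Y p.2 p.1‖ :=
    Finset.sum_nonneg fun p _ => mul_nonneg (norm_nonneg _) (norm_nonneg _)
  have h6 : ∑ p : (Fin N → Bool) × (Fin N → Bool), ‖X p.2 p.1‖ * ‖Y p.2 p.1‖
      = Real.sqrt ((∑ p : (Fin N → Bool) × (Fin N → Bool),
          ‖X p.2 p.1‖ * ‖Y p.2 p.1‖) ^ 2) := by
    rw [Real.sqrt_sq h5]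
  rw [h6]
  refine le_trans (Real.sqrt_le_sqrt h4) ?_
  rw [Real.sqrt_mul (Finset.sum_nonneg fun p _ => sq_nonneg _)]
  have habs2 : ∀ Z : QOp N, ∑ p : (Fin N → Bool) × (Fin N → Bool), ‖Z p.2 p.1‖ ^ 2 =
      ∑ u, ∑ w, Complex.normSq (Z u w) := by
    intro Z
    have h7 : ∑ w, ∑ u, ‖Z u w‖ ^ 2 = ∑ u, ∑ w, Complex.normSq (Z u w) := by
      rw [Finset.sum_comm]
      exact Finset.sum_congr rfl fun u _ => Finset.sum_congr rfl fun w _ => Complex.sq_norm _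
    rw [← h7, ← Finset.sum_product', Finset.univ_product_univ]
  rw [habs2 X, habs2 Y]

variable {ι : Fin L → Fin N}

lemma sumSq_left (hι : Function.Injective ι) (ρ : QOp N) (x y : Fin L → Bool) :
    ∑ u, ∑ w, Complex.normSq (((hatUnit N L ι y x)ᴴ * ρ) u w) = Tpatt ι ρ y := by
  classical
  obtain ⟨s, hs, hM1, hM2⟩ := hatUnit_repr ι hι y x
  have hX : ∀ u w, ((hatUnit N L ι y x)ᴴ * ρ) u w =
      if patt ι x u then (starRingEnd ℂ) (s u) * ρ (ovw ι y u) w else 0 := by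
    intro u w
    rw [Matrix.mul_apply]
    by_cases hu : patt ι x u
    · rw [if_pos hu, Finset.sum_eq_single (ovw ι y u)]
      · rw [Matrix.conjTranspose_apply, hM1, if_pos ⟨hu, rfl⟩]
        rfl
      · intro z _ hz
        rw [Matrix.conjTranspose_apply, hM1, if_neg, star_zero, zero_mul]
        rintro ⟨-, hz'⟩
        exact hz hz'
      · simp
    · rw [if_neg hu]
      refine Finset.sum_eq_zero fun z _ => ?_
      rw [Matrix.conjTranspose_apply, hM1, if_neg, star_zero, zero_mul]
      rintro ⟨hu', -⟩
      exact hu hu'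
  have hstep : ∑ u, ∑ w, Complex.normSq (((hatUnit N L ι y x)ᴴ * ρ) u w) =
      ∑ u ∈ Finset.univ.filter (patt ι x), rrq ρ (ovw ι y u) := by
    rw [Finset.sum_filter]
    refine Finset.sum_congr rfl fun u _ => ?_
    by_cases hu : patt ι x u
    · rw [if_pos hu, rrq]
      refine Finset.sum_congr rfl fun w _ => ?_
      rw [hX u w, if_pos hu, Complex.normSq_mul, Complex.normSq_conj,
        Complex.normSq_eq_norm_sq, hs u, one_pow, one_mul]
    · rw [if_neg hu]
      refine Finset.sum_eq_zero fun w _ => ?_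
      rw [hX u w, if_neg hu, Complex.normSq_zero]
  rw [hstep, Tpatt]
  refine Finset.sum_nbij' (fun u => ovw ι y u) (fun u => ovw ι x u) ?_ ?_ ?_ ?_ ?_
  · intro a ha
    simp only [Finset.mem_filter, Finset.mem_univ, true_and] at ha ⊢
    exact patt_ovw hι
  · intro a ha
    simp only [Finset.mem_filter, Finset.mem_univ, true_and] at ha ⊢
    exact patt_ovw hι
  · intro a ha
    simp only [Finset.mem_filter, Finset.mem_univ, true_and] at ha
    exact ovw_ovw hι ha
  · intro a ha
    simp only [Finset.mem_filter, Finset.mem_univ, true_and] at ha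
    exact ovw_ovw hι ha
  · intro a _
    rfl

lemma sumSq_right (hι : Function.Injective ι) (ρ : QOp N) (hρ : ρᴴ = ρ) (x y : Fin L → Bool) :
    ∑ u, ∑ w, Complex.normSq ((ρ * (hatUnit N L ι y x)ᴴ) u w) = Tpatt ι ρ x := by
  classical
  obtain ⟨s, hs, hM1, hM2⟩ := hatUnit_repr ι hι y x
  have hY : ∀ u w, (ρ * (hatUnit N L ι y x)ᴴ) u w =
      if patt ι y w then ρ u (ovw ι x w) * (starRingEnd ℂ) (s (ovw ι x w)) else 0 := by
    intro u w
    rw [Matrix.mul_apply]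
    by_cases hw : patt ι y w
    · rw [if_pos hw, Finset.sum_eq_single (ovw ι x w)]
      · rw [Matrix.conjTranspose_apply, hM2, if_pos ⟨hw, rfl⟩]
        rfl
      · intro z _ hz
        rw [Matrix.conjTranspose_apply, hM2, if_neg, star_zero, mul_zero]
        rintro ⟨-, hz'⟩
        exact hz hz'
      · simp
    · rw [if_neg hw]
      refine Finset.sum_eq_zero fun z _ => ?_
      rw [Matrix.conjTranspose_apply, hM2, if_neg, star_zero, mul_zero]
      rintro ⟨hw', -⟩
      exact hw hw'
  have hcc : ∀ z, (∑ u, Complex.normSq (ρ u z)) = rrq ρ z := by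
    intro z
    rw [rrq]
    refine Finset.sum_congr rfl fun u _ => ?_
    have : ρ u z = (starRingEnd ℂ) (ρ z u) := by
      conv_lhs => rw [← hρ]
      rfl
    rw [this, Complex.normSq_conj]
  have hstep : ∑ u, ∑ w, Complex.normSq ((ρ * (hatUnit N L ι y x)ᴴ) u w) =
      ∑ w ∈ Finset.univ.filter (patt ι y), rrq ρ (ovw ι x w) := by
    rw [Finset.sum_comm, Finset.sum_filter]
    refine Finset.sum_congr rfl fun w _ => ?_
    by_cases hw : patt ι y w
    · rw [if_pos hw, ← hcc (ovw ι x w)]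
      refine Finset.sum_congr rfl fun u _ => ?_
      rw [hY u w, if_pos hw, Complex.normSq_mul, Complex.normSq_conj]
      have h1 : Complex.normSq (s (ovw ι x w)) = 1 := by
        rw [Complex.normSq_eq_norm_sq, hs _, one_pow]
      rw [h1, mul_one]
    · rw [if_neg hw]
      refine Finset.sum_eq_zero fun u _ => ?_
      rw [hY u w, if_neg hw, Complex.normSq_zero]
  rw [hstep, Tpatt]
  refine Finset.sum_nbij' (fun u => ovw ι x u) (fun u => ovw ι y u) ?_ ?_ ?_ ?_ ?_
  · intro a ha
    simp only [Finset.mem_filter, Finset.mem_univ, true_and] at ha ⊢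
    exact patt_ovw hι
  · intro a ha
    simp only [Finset.mem_filter, Finset.mem_univ, true_and] at ha ⊢
    exact patt_ovw hι
  · intro a ha
    simp only [Finset.mem_filter, Finset.mem_univ, true_and] at ha
    exact ovw_ovw hι ha
  · intro a ha
    simp only [Finset.mem_filter, Finset.mem_univ, true_and] at ha
    exact ovw_ovw hι ha
  · intro a _
    rfl

end Key
-- chunk 6: core bound assembled
section Core

variable {N L : ℕ}

/-- model time-averaged state. -/
def rhom (v : (Fin N → Bool) → ((Fin N → Bool) → ℂ)) (pr : (Fin N → Bool) → ℝ) : QOp N :=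
  ∑ j, ((pr j : ℝ) : ℂ) • Matrix.vecMulVec (v j) (star (v j))

lemma rhom_herm (v : (Fin N → Bool) → ((Fin N → Bool) → ℂ)) (pr : (Fin N → Bool) → ℝ) :
    (rhom v pr)ᴴ = rhom v pr := by
  rw [rhom, Matrix.conjTranspose_sum]
  refine Finset.sum_congr rfl fun j _ => ?_
  rw [Matrix.conjTranspose_smul]
  have h1 : star ((pr j : ℝ) : ℂ) = ((pr j : ℝ) : ℂ) := by
    rw [Complex.star_def, Complex.conj_ofReal]
  rw [h1]
  congr 1
  ext u w
  simp only [Matrix.conjTranspose_apply, Matrix.vecMulVec_apply, Pi.star_apply,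
    Complex.star_def, _root_.map_mul, Complex.conj_conj]
  ring

lemma rhom_entry_mul (v : (Fin N → Bool) → ((Fin N → Bool) → ℂ)) (pr : (Fin N → Bool) → ℝ)
    (M M' : QOp N) :
    ((rhom v pr * M) * (rhom v pr * M')).trace =
      ∑ j, ∑ k, ((pr j : ℂ) * (pr k : ℂ)) *
        ((Matrix.vecMulVec (v j) (star (v j)) * M) *
          (Matrix.vecMulVec (v k) (star (v k)) * M')).trace := by
  simp only [rhom, Matrix.sum_mul, Matrix.mul_sum, Matrix.smul_mul, Matrix.mul_smul,
    Matrix.trace_sum, Matrix.trace_smul, smul_smul, smul_eq_mul, Finset.mul_sum]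
  rw [Finset.sum_comm]
  exact Finset.sum_congr rfl fun j _ => Finset.sum_congr rfl fun k _ => by ring

lemma trace_quad_entry (v : (Fin N → Bool) → ((Fin N → Bool) → ℂ)) (M : QOp N)
    (j k : Fin N → Bool) :
    ((Matrix.vecMulVec (v j) (star (v j)) * M) *
        (Matrix.vecMulVec (v k) (star (v k)) * Mᴴ)).trace =
      (Complex.normSq ((Matrix.vecMulVec (v k) (star (v j)) * M).trace) : ℂ) := by
  rw [Matrix.mul_assoc, trace_vecMulVec_mul, ← Matrix.mulVec_mulVec, ← Matrix.mulVec_mulVec,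
    _root_.vecMulVec_mulVec, dot_conjTranspose, Matrix.mulVec_smul, dotProduct_smul,
    trace_vecMulVec_mul, smul_eq_mul, mul_comm, Complex.mul_conj]

lemma trace_quad (v : (Fin N → Bool) → ((Fin N → Bool) → ℂ)) (pr : (Fin N → Bool) → ℝ)
    (M : QOp N) :
    (((Mᴴ * rhom v pr)ᴴ) * (rhom v pr * Mᴴ)).trace =
      ((∑ j, ∑ k, (pr j * pr k) *
        Complex.normSq ((Matrix.vecMulVec (v j) (star (v k)) * M).trace) : ℝ) : ℂ) := by
  have h0 : (Mᴴ * rhom v pr)ᴴ = rhom v pr * M := by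
    rw [Matrix.conjTranspose_mul, Matrix.conjTranspose_conjTranspose, rhom_herm]
  rw [h0, rhom_entry_mul]
  have hterm : ∀ j k : Fin N → Bool, ((pr j : ℂ) * (pr k : ℂ)) *
      ((Matrix.vecMulVec (v j) (star (v j)) * M) *
        (Matrix.vecMulVec (v k) (star (v k)) * Mᴴ)).trace =
      (((pr j * pr k) *
        Complex.normSq ((Matrix.vecMulVec (v k) (star (v j)) * M).trace) : ℝ) : ℂ) := by
    intro j k
    rw [trace_quad_entry]
    push_cast
    ring
  rw [Finset.sum_congr rfl fun j _ => Finset.sum_congr rfl fun k _ => hterm j k,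
    Finset.sum_comm]
  push_cast
  refine Finset.sum_congr rfl fun k _ => Finset.sum_congr rfl fun j _ => by ring

lemma key_xy {ι : Fin L → Fin N} (hι : Function.Injective ι)
    (v : (Fin N → Bool) → ((Fin N → Bool) → ℂ)) (pr : (Fin N → Bool) → ℝ)
    (x y : Fin L → Bool) :
    ∑ j, ∑ k, (pr j * pr k) *
        Complex.normSq ((Matrix.vecMulVec (v j) (star (v k)) * hatUnit N L ι y x).trace) ≤
      Real.sqrt (Tpatt ι (rhom v pr) y) * Real.sqrt (Tpatt ι (rhom v pr) x) := by
  have h1 := trace_quad v pr (hatUnit N L ι y x)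
  have h2 := hs_cauchy ((hatUnit N L ι y x)ᴴ * rhom v pr) (rhom v pr * (hatUnit N L ι y x)ᴴ)
  rw [h1, Complex.ofReal_re, sumSq_left hι (rhom v pr) x y,
    sumSq_right hι (rhom v pr) (rhom_herm v pr) x y] at h2
  exact h2

lemma Tpatt_partition {ι : Fin L → Fin N} (ρ : QOp N) :
    ∑ x : Fin L → Bool, Tpatt ι ρ x = ∑ u, rrq ρ u := by
  classical
  have hfib := Finset.sum_fiberwise (Finset.univ : Finset (Fin N → Bool))
    (fun u => fun k => u (ι k)) (rrq ρ)
  rw [← hfib]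
  refine Finset.sum_congr rfl fun x _ => ?_
  rw [Tpatt]
  refine Finset.sum_congr ?_ fun u _ => rfl
  apply Finset.filter_congr
  intro u _
  simp only [patt, funext_iff]

lemma core_bound {ι : Fin L → Fin N} (hι : Function.Injective ι)
    (v : (Fin N → Bool) → ((Fin N → Bool) → ℂ)) (pr : (Fin N → Bool) → ℝ) :
    ∑ x : Fin L → Bool, ∑ y : Fin L → Bool, ∑ j, ∑ k, (pr j * pr k) *
        Complex.normSq ((Matrix.vecMulVec (v j) (star (v k)) * hatUnit N L ι y x).trace) ≤
      (2 ^ L : ℝ) * ∑ u, rrq (rhom v pr) u := by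
  have h1 : ∑ x : Fin L → Bool, ∑ y : Fin L → Bool, ∑ j, ∑ k, (pr j * pr k) *
      Complex.normSq ((Matrix.vecMulVec (v j) (star (v k)) * hatUnit N L ι y x).trace) ≤
      ∑ x : Fin L → Bool, ∑ y : Fin L → Bool,
        Real.sqrt (Tpatt ι (rhom v pr) y) * Real.sqrt (Tpatt ι (rhom v pr) x) :=
    Finset.sum_le_sum fun x _ => Finset.sum_le_sum fun y _ => key_xy hι v pr x y
  refine le_trans h1 ?_
  have h2 : ∑ x : Fin L → Bool, ∑ y : Fin L → Bool,
      Real.sqrt (Tpatt ι (rhom v pr) y) * Real.sqrt (Tpatt ι (rhom v pr) x) =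
      (∑ x : Fin L → Bool, Real.sqrt (Tpatt ι (rhom v pr) x)) ^ 2 := by
    rw [sq, Finset.sum_mul]
    refine Finset.sum_congr rfl fun x _ => ?_
    rw [← Finset.sum_mul, mul_comm]
  rw [h2]
  have h3 := Finset.sum_mul_sq_le_sq_mul_sq (Finset.univ : Finset (Fin L → Bool))
    (fun x => Real.sqrt (Tpatt ι (rhom v pr) x)) (fun _ => (1 : ℝ))
  simp only [mul_one, one_pow] at h3
  have h4 : ∑ x : Fin L → Bool, Real.sqrt (Tpatt ι (rhom v pr) x) ^ 2 =
      ∑ u, rrq (rhom v pr) u := by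
    rw [← Tpatt_partition (ι := ι) (rhom v pr)]
    exact Finset.sum_congr rfl fun x _ => Real.sq_sqrt (Tpatt_nonneg _ _ _)
  have h5 : ∑ _x : Fin L → Bool, (1 : ℝ) = (2 ^ L : ℝ) := by
    rw [Finset.sum_const, Finset.card_univ]
    simp [Fintype.card_fun]
  calc (∑ x : Fin L → Bool, Real.sqrt (Tpatt ι (rhom v pr) x)) ^ 2
      ≤ (∑ x : Fin L → Bool, Real.sqrt (Tpatt ι (rhom v pr) x) ^ 2) *
        ∑ _x : Fin L → Bool, (1 : ℝ) := h3
    _ = (∑ u, rrq (rhom v pr) u) * (2 ^ L : ℝ) := by rw [h4, h5]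
    _ = (2 ^ L : ℝ) * ∑ u, rrq (rhom v pr) u := by ring

lemma rrq_rhom_total {v : (Fin N → Bool) → ((Fin N → Bool) → ℂ)}
    (horth : ∀ j j', star (v j) ⬝ᵥ v j' = if j = j' then (1 : ℂ) else 0)
    (pr : (Fin N → Bool) → ℝ) :
    ∑ u, rrq (rhom v pr) u = ∑ j, (pr j) ^ 2 := by
  have h1 : (((rhom v pr)ᴴ) * rhom v pr).trace = ((∑ u, rrq (rhom v pr) u : ℝ) : ℂ) := by
    rw [trace_conjTranspose_mul, Finset.sum_comm]
    push_cast
    refine Finset.sum_congr rfl fun u _ => ?_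
    rw [rrq]
    push_cast
    refine Finset.sum_congr rfl fun w _ => ?_
    rw [mul_comm, Complex.mul_conj]
  have htr : ∀ j k : Fin N → Bool,
      ((Matrix.vecMulVec (v j) (star (v j)) * 1) *
        (Matrix.vecMulVec (v k) (star (v k)) * 1)).trace =
        if j = k then 1 else 0 := by
    intro j k
    rw [Matrix.mul_one, Matrix.mul_one, trace_vecMulVec_mul, _root_.vecMulVec_mulVec,
      dotProduct_smul, smul_eq_mul, horth k j, horth j k]
    by_cases h : j = k
    · subst h
      simp
    · rw [if_neg h, if_neg (Ne.symm h), mul_zero]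
  have h2 : (((rhom v pr)ᴴ) * rhom v pr).trace = ((∑ j, (pr j) ^ 2 : ℝ) : ℂ) := by
    have h0 : ((rhom v pr)ᴴ) * rhom v pr = (rhom v pr * 1) * (rhom v pr * 1) := by
      rw [rhom_herm, Matrix.mul_one]
    rw [h0, rhom_entry_mul]
    have hterm : ∀ j k : Fin N → Bool, ((pr j : ℂ) * (pr k : ℂ)) *
        ((Matrix.vecMulVec (v j) (star (v j)) * 1) *
          (Matrix.vecMulVec (v k) (star (v k)) * 1)).trace =
        if k = j then (((pr j) ^ 2 : ℝ) : ℂ) else 0 := by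
      intro j k
      rw [htr j k]
      by_cases h : j = k
      · subst h
        rw [if_pos rfl, if_pos rfl, mul_one]
        push_cast
        ring
      · rw [if_neg h, if_neg (fun hc => h hc.symm), mul_zero]
    rw [Finset.sum_congr rfl fun j _ => Finset.sum_congr rfl fun k _ => hterm j k]
    simp only [Finset.sum_ite_eq', Finset.mem_univ, if_true]
    push_cast
    rfl
  have := h1.symm.trans h2
  exact_mod_cast this

end Core
-- chunk 7: generic averaging
section Avg

variable {κ B : Type*} [Fintype κ] [DecidableEq κ] [Fintype B] [DecidableEq B]

lemma exp_mul_conj_exp (a b t : ℝ) :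
    Complex.exp (-(a : ℂ) * Complex.I * t) *
      (starRingEnd ℂ) (Complex.exp (-(b : ℂ) * Complex.I * t)) =
      Complex.exp (-((a - b : ℝ) : ℂ) * Complex.I * t) := by
  rw [← Complex.exp_conj, ← Complex.exp_add]
  congr 1
  simp only [_root_.map_mul, map_neg, Complex.conj_ofReal, Complex.conj_I]
  push_cast
  ring

lemma frob_expand (P : Finset κ) (βe : κ → ℂ) (ω : κ → ℝ) (Rm : κ → Matrix B B ℂ) (t : ℝ) :
    frobSq (fun x y => ∑ p ∈ P, βe p * Complex.exp (-(ω p : ℂ) * Complex.I * t) * Rm p x y) =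
    (∑ r ∈ P ×ˢ P, (βe r.1 * (starRingEnd ℂ) (βe r.2) *
        (∑ x, ∑ y, Rm r.1 x y * (starRingEnd ℂ) (Rm r.2 x y))) *
      Complex.exp (-((ω r.1 - ω r.2 : ℝ) : ℂ) * Complex.I * t)).re := by
  set M : Matrix B B ℂ :=
    fun x y => ∑ p ∈ P, βe p * Complex.exp (-(ω p : ℂ) * Complex.I * t) * Rm p x y with hM
  have e0 : frobSq M = (∑ z ∈ (Finset.univ ×ˢ Finset.univ : Finset (B × B)),
      M z.1 z.2 * (starRingEnd ℂ) (M z.1 z.2)).re := by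
    rw [frobSq, Complex.re_sum, Finset.sum_product]
    refine Finset.sum_congr rfl fun x _ => ?_
    refine Finset.sum_congr rfl fun y _ => ?_
    rw [Complex.mul_conj, Complex.ofReal_re, Complex.sq_norm]
  rw [e0]
  congr 1
  have e1 : ∀ z : B × B, M z.1 z.2 * (starRingEnd ℂ) (M z.1 z.2) =
      ∑ r ∈ P ×ˢ P, (βe r.1 * Complex.exp (-(ω r.1 : ℂ) * Complex.I * t) * Rm r.1 z.1 z.2) *
        (starRingEnd ℂ) (βe r.2 * Complex.exp (-(ω r.2 : ℂ) * Complex.I * t) *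
          Rm r.2 z.1 z.2) := by
    intro z
    rw [hM]
    simp only [_root_.map_sum]
    rw [Finset.sum_mul_sum, Finset.sum_product]
  rw [Finset.sum_congr rfl fun z _ => e1 z, Finset.sum_comm]
  refine Finset.sum_congr rfl fun r _ => ?_
  have e2 : ∀ z : B × B,
      (βe r.1 * Complex.exp (-(ω r.1 : ℂ) * Complex.I * t) * Rm r.1 z.1 z.2) *
        (starRingEnd ℂ) (βe r.2 * Complex.exp (-(ω r.2 : ℂ) * Complex.I * t) *
          Rm r.2 z.1 z.2) =
      (βe r.1 * (starRingEnd ℂ) (βe r.2) *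
        Complex.exp (-((ω r.1 - ω r.2 : ℝ) : ℂ) * Complex.I * t)) *
        (Rm r.1 z.1 z.2 * (starRingEnd ℂ) (Rm r.2 z.1 z.2)) := by
    intro z
    rw [← exp_mul_conj_exp (ω r.1) (ω r.2) t]
    simp only [_root_.map_mul]
    ring
  rw [Finset.sum_congr rfl fun z _ => e2 z, ← Finset.mul_sum]
  rw [Finset.sum_product]
  ring

lemma integrand_cont (ω : ℝ) (co : ℂ) :
    Continuous fun t : ℝ => co * Complex.exp (-(ω : ℂ) * Complex.I * t) :=
  continuous_const.mul (cexp_cont ω)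

lemma avg_formula (P : Finset κ) (βe : κ → ℂ) (ω : κ → ℝ) (Rm : κ → Matrix B B ℂ) (τ : ℝ) :
    (1 / τ) * ∫ t in (0:ℝ)..τ,
        frobSq (fun x y => ∑ p ∈ P, βe p * Complex.exp (-(ω p : ℂ) * Complex.I * t) * Rm p x y) =
    (∑ r ∈ P ×ˢ P, (βe r.1 * (starRingEnd ℂ) (βe r.2) *
        (∑ x, ∑ y, Rm r.1 x y * (starRingEnd ℂ) (Rm r.2 x y))) *
      ((1 / (τ : ℂ)) * ∫ t in (0:ℝ)..τ,
        Complex.exp (-((ω r.1 - ω r.2 : ℝ) : ℂ) * Complex.I * t))).re := by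
  have hint : ∀ r : κ × κ, IntervalIntegrable
      (fun t : ℝ => (βe r.1 * (starRingEnd ℂ) (βe r.2) *
          (∑ x, ∑ y, Rm r.1 x y * (starRingEnd ℂ) (Rm r.2 x y))) *
        Complex.exp (-((ω r.1 - ω r.2 : ℝ) : ℂ) * Complex.I * t))
      MeasureTheory.volume 0 τ :=
    fun r => (integrand_cont _ _).intervalIntegrable 0 τ
  have hF2 : Continuous (fun t : ℝ => ∑ r ∈ P ×ˢ P,
      (βe r.1 * (starRingEnd ℂ) (βe r.2) *
        (∑ x, ∑ y, Rm r.1 x y * (starRingEnd ℂ) (Rm r.2 x y))) *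
      Complex.exp (-((ω r.1 - ω r.2 : ℝ) : ℂ) * Complex.I * t)) :=
    continuous_finset_sum _ fun r _ => integrand_cont _ _
  simp only [frob_expand P βe ω Rm]
  have h1 : ∫ t in (0:ℝ)..τ, (∑ r ∈ P ×ˢ P,
      (βe r.1 * (starRingEnd ℂ) (βe r.2) *
        (∑ x, ∑ y, Rm r.1 x y * (starRingEnd ℂ) (Rm r.2 x y))) *
      Complex.exp (-((ω r.1 - ω r.2 : ℝ) : ℂ) * Complex.I * t)).re =
      (∫ t in (0:ℝ)..τ, ∑ r ∈ P ×ˢ P,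
      (βe r.1 * (starRingEnd ℂ) (βe r.2) *
        (∑ x, ∑ y, Rm r.1 x y * (starRingEnd ℂ) (Rm r.2 x y))) *
      Complex.exp (-((ω r.1 - ω r.2 : ℝ) : ℂ) * Complex.I * t)).re := by
    have := ContinuousLinearMap.intervalIntegral_comp_comm Complex.reCLM
      (hF2.intervalIntegrable (μ := MeasureTheory.volume) 0 τ)
    simpa using this
  rw [h1]
  have h2 : ∫ t in (0:ℝ)..τ, ∑ r ∈ P ×ˢ P,
      (βe r.1 * (starRingEnd ℂ) (βe r.2) *
        (∑ x, ∑ y, Rm r.1 x y * (starRingEnd ℂ) (Rm r.2 x y))) *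
      Complex.exp (-((ω r.1 - ω r.2 : ℝ) : ℂ) * Complex.I * t) =
      ∑ r ∈ P ×ˢ P, (βe r.1 * (starRingEnd ℂ) (βe r.2) *
        (∑ x, ∑ y, Rm r.1 x y * (starRingEnd ℂ) (Rm r.2 x y))) *
      ∫ t in (0:ℝ)..τ, Complex.exp (-((ω r.1 - ω r.2 : ℝ) : ℂ) * Complex.I * t) := by
    rw [intervalIntegral.integral_finset_sum (fun r _ => hint r)]
    exact Finset.sum_congr rfl fun r _ => by rw [intervalIntegral.integral_const_mul]
  rw [h2]
  rw [← Complex.re_ofReal_mul]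
  congr 1
  rw [Finset.mul_sum]
  refine Finset.sum_congr rfl fun r _ => ?_
  push_cast
  ring

lemma avg_limsup (P : Finset κ) (βe : κ → ℂ) (ω : κ → ℝ) (Rm : κ → Matrix B B ℂ)
    (hω : ∀ p ∈ P, ∀ q ∈ P, ω p = ω q → p = q) :
    Filter.limsup (fun τ : ℝ => (1 / τ) * ∫ t in (0:ℝ)..τ,
        frobSq (fun x y => ∑ p ∈ P, βe p * Complex.exp (-(ω p : ℂ) * Complex.I * t) * Rm p x y))
      Filter.atTop =
    (∑ p ∈ P, βe p * (starRingEnd ℂ) (βe p) *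
        (∑ x, ∑ y, Rm p x y * (starRingEnd ℂ) (Rm p x y))).re := by
  have hfun : (fun τ : ℝ => (1 / τ) * ∫ t in (0:ℝ)..τ,
      frobSq (fun x y => ∑ p ∈ P, βe p * Complex.exp (-(ω p : ℂ) * Complex.I * t) * Rm p x y)) =
      fun τ : ℝ => (∑ r ∈ P ×ˢ P, (βe r.1 * (starRingEnd ℂ) (βe r.2) *
        (∑ x, ∑ y, Rm r.1 x y * (starRingEnd ℂ) (Rm r.2 x y))) *
      ((1 / (τ : ℂ)) * ∫ t in (0:ℝ)..τ,
        Complex.exp (-((ω r.1 - ω r.2 : ℝ) : ℂ) * Complex.I * t))).re :=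
    funext fun τ => avg_formula P βe ω Rm τ
  rw [hfun]
  have hT : Filter.Tendsto (fun τ : ℝ => ∑ r ∈ P ×ˢ P,
      (βe r.1 * (starRingEnd ℂ) (βe r.2) *
        (∑ x, ∑ y, Rm r.1 x y * (starRingEnd ℂ) (Rm r.2 x y))) *
      ((1 / (τ : ℂ)) * ∫ t in (0:ℝ)..τ,
        Complex.exp (-((ω r.1 - ω r.2 : ℝ) : ℂ) * Complex.I * t)))
      Filter.atTop (nhds (∑ r ∈ P ×ˢ P,
      (βe r.1 * (starRingEnd ℂ) (βe r.2) *
        (∑ x, ∑ y, Rm r.1 x y * (starRingEnd ℂ) (Rm r.2 x y))) *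
      (if (ω r.1 - ω r.2 : ℝ) = 0 then 1 else 0))) := by
    refine tendsto_finset_sum _ fun r _ => ?_
    exact (tendsto_avg_exp (ω r.1 - ω r.2)).const_mul _
  have hS : ∑ r ∈ P ×ˢ P, (βe r.1 * (starRingEnd ℂ) (βe r.2) *
      (∑ x, ∑ y, Rm r.1 x y * (starRingEnd ℂ) (Rm r.2 x y))) *
      (if (ω r.1 - ω r.2 : ℝ) = 0 then 1 else 0) =
      ∑ p ∈ P, βe p * (starRingEnd ℂ) (βe p) *
        (∑ x, ∑ y, Rm p x y * (starRingEnd ℂ) (Rm p x y)) := by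
    rw [Finset.sum_product]
    refine Finset.sum_congr rfl fun p hp => ?_
    rw [Finset.sum_eq_single_of_mem p hp]
    · rw [sub_self, if_pos rfl, mul_one]
    · intro q hq hqp
      rw [if_neg, mul_zero]
      intro h0
      exact hqp (hω p hp q hq (sub_eq_zero.mp h0)).symm
  rw [← hS]
  exact ((Complex.continuous_re.tendsto _).comp hT).limsup_eq

end Avg
-- chunk 8: main bound and final assembly
section MainBound

lemma main_bound {N L : ℕ} (ι : Fin L → Fin N) (hι : Function.Injective ι)
    (E : (Fin N → Bool) → ℝ) (v : (Fin N → Bool) → ((Fin N → Bool) → ℂ))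
    (horth : ∀ j j', star (v j) ⬝ᵥ v j' = if j = j' then (1 : ℂ) else 0)
    (hgapE : ∀ j k j' k' : Fin N → Bool, j ≠ k → j' ≠ k' →
      E j - E k = E j' - E k' → j = j' ∧ k = k')
    (c : (Fin N → Bool) → ℂ) :
    Filter.limsup (fun τ : ℝ => (1 / τ) * ∫ t in (0:ℝ)..τ,
        frobSq (fun x y => ∑ p ∈ Finset.univ.filter
            (fun p : (Fin N → Bool) × (Fin N → Bool) => ¬ p.1 = p.2),
          (c p.1 * (starRingEnd ℂ) (c p.2)) *
            Complex.exp (-((E p.1 - E p.2 : ℝ) : ℂ) * Complex.I * t) *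
            (Matrix.vecMulVec (v p.1) (star (v p.2)) * hatUnit N L ι y x).trace))
      Filter.atTop ≤ (2 ^ L : ℝ) * ∑ j, (‖c j‖ ^ 2) ^ 2 := by
  classical
  have hω : ∀ p ∈ Finset.univ.filter
      (fun p : (Fin N → Bool) × (Fin N → Bool) => ¬ p.1 = p.2),
      ∀ q ∈ Finset.univ.filter
      (fun p : (Fin N → Bool) × (Fin N → Bool) => ¬ p.1 = p.2),
      E p.1 - E p.2 = E q.1 - E q.2 → p = q := by
    intro p hp q hq h
    simp only [Finset.mem_filter, Finset.mem_univ, true_and] at hp hq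
    obtain ⟨h1, h2⟩ := hgapE p.1 p.2 q.1 q.2 hp hq h
    exact Prod.ext h1 h2
  have hls := avg_limsup (Finset.univ.filter
      (fun p : (Fin N → Bool) × (Fin N → Bool) => ¬ p.1 = p.2))
    (fun p => c p.1 * (starRingEnd ℂ) (c p.2)) (fun p => E p.1 - E p.2)
    (fun p => fun x y => (Matrix.vecMulVec (v p.1) (star (v p.2)) * hatUnit N L ι y x).trace) hω
  refine hls.trans_le ?_
  set pr : (Fin N → Bool) → ℝ := fun j => ‖c j‖ ^ 2 with hpr
  -- compute the real value of the limit
  have hterm : ∀ p : (Fin N → Bool) × (Fin N → Bool),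
      (c p.1 * (starRingEnd ℂ) (c p.2)) * (starRingEnd ℂ) (c p.1 * (starRingEnd ℂ) (c p.2)) *
        (∑ x : Fin L → Bool, ∑ y : Fin L → Bool,
          (Matrix.vecMulVec (v p.1) (star (v p.2)) * hatUnit N L ι y x).trace *
            (starRingEnd ℂ) ((Matrix.vecMulVec (v p.1) (star (v p.2)) * hatUnit N L ι y x).trace))
      = (((pr p.1 * pr p.2) * ∑ x : Fin L → Bool, ∑ y : Fin L → Bool,
          Complex.normSq ((Matrix.vecMulVec (v p.1) (star (v p.2)) *
            hatUnit N L ι y x).trace) : ℝ) : ℂ) := by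
    intro p
    simp only [hpr]
    have hG : (∑ x : Fin L → Bool, ∑ y : Fin L → Bool,
        (Matrix.vecMulVec (v p.1) (star (v p.2)) * hatUnit N L ι y x).trace *
          (starRingEnd ℂ) ((Matrix.vecMulVec (v p.1) (star (v p.2)) * hatUnit N L ι y x).trace))
        = ((∑ x : Fin L → Bool, ∑ y : Fin L → Bool,
          Complex.normSq ((Matrix.vecMulVec (v p.1) (star (v p.2)) *
            hatUnit N L ι y x).trace) : ℝ) : ℂ) := by
      push_cast
      exact Finset.sum_congr rfl fun x _ => Finset.sum_congr rfl fun y _ => Complex.mul_conj _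
    rw [Complex.mul_conj, hG]
    push_cast
    rw [Complex.normSq_mul, Complex.normSq_conj, Complex.normSq_eq_norm_sq, Complex.normSq_eq_norm_sq]
    push_cast
    ring
  rw [Finset.sum_congr rfl fun p _ => hterm p, Complex.re_sum]
  have hre : ∀ p ∈ Finset.univ.filter
      (fun p : (Fin N → Bool) × (Fin N → Bool) => ¬ p.1 = p.2),
      (((pr p.1 * pr p.2) * ∑ x : Fin L → Bool, ∑ y : Fin L → Bool,
        Complex.normSq ((Matrix.vecMulVec (v p.1) (star (v p.2)) *
          hatUnit N L ι y x).trace) : ℝ) : ℂ).re =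
      (pr p.1 * pr p.2) * ∑ x : Fin L → Bool, ∑ y : Fin L → Bool,
        Complex.normSq ((Matrix.vecMulVec (v p.1) (star (v p.2)) *
          hatUnit N L ι y x).trace) := fun p _ => Complex.ofReal_re _
  rw [Finset.sum_congr rfl hre]
  have hmono : ∑ p ∈ Finset.univ.filter
      (fun p : (Fin N → Bool) × (Fin N → Bool) => ¬ p.1 = p.2),
      (pr p.1 * pr p.2) * ∑ x : Fin L → Bool, ∑ y : Fin L → Bool,
        Complex.normSq ((Matrix.vecMulVec (v p.1) (star (v p.2)) *
          hatUnit N L ι y x).trace) ≤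
      ∑ p : (Fin N → Bool) × (Fin N → Bool),
      (pr p.1 * pr p.2) * ∑ x : Fin L → Bool, ∑ y : Fin L → Bool,
        Complex.normSq ((Matrix.vecMulVec (v p.1) (star (v p.2)) *
          hatUnit N L ι y x).trace) := by
    refine Finset.sum_le_sum_of_subset_of_nonneg (Finset.filter_subset _ _) ?_
    intro p _ _
    have h1 : (0:ℝ) ≤ pr p.1 * pr p.2 := mul_nonneg (by positivity) (by positivity)
    refine mul_nonneg h1 (Finset.sum_nonneg fun x _ => Finset.sum_nonneg fun y _ =>
      Complex.normSq_nonneg _)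
  refine le_trans hmono ?_
  have hswap : ∑ p : (Fin N → Bool) × (Fin N → Bool),
      (pr p.1 * pr p.2) * ∑ x : Fin L → Bool, ∑ y : Fin L → Bool,
        Complex.normSq ((Matrix.vecMulVec (v p.1) (star (v p.2)) *
          hatUnit N L ι y x).trace) =
      ∑ x : Fin L → Bool, ∑ y : Fin L → Bool, ∑ j, ∑ k, (pr j * pr k) *
        Complex.normSq ((Matrix.vecMulVec (v j) (star (v k)) * hatUnit N L ι y x).trace) := by
    have h1 : ∀ p : (Fin N → Bool) × (Fin N → Bool),
        (pr p.1 * pr p.2) * ∑ x : Fin L → Bool, ∑ y : Fin L → Bool,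
          Complex.normSq ((Matrix.vecMulVec (v p.1) (star (v p.2)) *
            hatUnit N L ι y x).trace) =
        ∑ z ∈ (Finset.univ ×ˢ Finset.univ : Finset ((Fin L → Bool) × (Fin L → Bool))),
          (pr p.1 * pr p.2) * Complex.normSq ((Matrix.vecMulVec (v p.1) (star (v p.2)) *
            hatUnit N L ι z.2 z.1).trace) := by
      intro p
      rw [Finset.sum_product, Finset.mul_sum]
      exact Finset.sum_congr rfl fun x _ => by rw [Finset.mul_sum]
    rw [Finset.sum_congr rfl fun p _ => h1 p, Finset.sum_comm, Finset.sum_product]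
    refine Finset.sum_congr rfl fun x _ => Finset.sum_congr rfl fun y _ => ?_
    rw [← Finset.univ_product_univ, Finset.sum_product]
  rw [hswap]
  refine le_trans (core_bound hι v pr) ?_
  rw [rrq_rhom_total horth pr]

end MainBound
/-- Equilibration of the fermionic reduced density matrix in Frobenius norm:
`limsup_{τ→∞} (1/τ)∫₀^τ ‖ρ(t)_A − ρ̄_A‖₂² dt ≤ 2^L / D_eff`. -/
theorem subsystem_equilibration_frobenius (N L : ℕ) (A : Finset (Fin N)) (hA : A.card = L)
    (H : QOp N) (hH : H.IsHermitian) (hgap : NondegGaps H)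
    (E : (Fin N → Bool) → ℝ) (v : (Fin N → Bool) → ((Fin N → Bool) → ℂ))
    (horth : ∀ j j', star (v j) ⬝ᵥ v j' = if j = j' then (1 : ℂ) else 0)
    (heig : ∀ j, H *ᵥ v j = (E j : ℂ) • v j)
    (φ : (Fin N → Bool) → ℂ) (hφ : star φ ⬝ᵥ φ = 1) :
    Filter.limsup (fun τ : ℝ => (1 / τ) * ∫ t in (0:ℝ)..τ,
        frobSq (fermRDM N L A hA (outer N (evolve N H t φ)) -
          fermRDM N L A hA
            (∑ j, ((‖star (v j) ⬝ᵥ φ‖ ^ 2 : ℝ) : ℂ) • outer N (v j))))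
      Filter.atTop ≤
      (2 ^ L : ℝ) / (∑ j, ‖star (v j) ⬝ᵥ φ‖ ^ 4)⁻¹ := by
  classical
  have hι : Function.Injective (fun k => A.orderEmbOfFin hA k) :=
    fun a b hab => (A.orderEmbOfFin hA).injective hab
  have hgapE : ∀ j k j' k' : Fin N → Bool, j ≠ k → j' ≠ k' →
      E j - E k = E j' - E k' → j = j' ∧ k = k' :=
    fun j k j' k' h1 h2 h3 => gaps_separate horth heig hgap h1 h2 h3
  -- an auxiliary exponential identity
  have hE' : ∀ (t a b : ℝ), Complex.exp ((-(t:ℂ) * Complex.I) * (a:ℂ)) *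
      (starRingEnd ℂ) (Complex.exp ((-(t:ℂ) * Complex.I) * (b:ℂ))) =
      Complex.exp (-((a - b : ℝ) : ℂ) * Complex.I * t) := by
    intro t a b
    rw [show ((-(t:ℂ) * Complex.I) * (a:ℂ)) = -((a:ℝ):ℂ) * Complex.I * t from by push_cast; ring,
      show ((-(t:ℂ) * Complex.I) * (b:ℂ)) = -((b:ℝ):ℂ) * Complex.I * t from by push_cast; ring]
    exact exp_mul_conj_exp a b t
  -- difference formula
  have hdiff : ∀ t : ℝ,
      (fermRDM N L A hA (outer N (evolve N H t φ)) -
        fermRDM N L A hA (∑ j, ((‖star (v j) ⬝ᵥ φ‖ ^ 2 : ℝ) : ℂ) • outer N (v j))) =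
      fun x y => ∑ p ∈ Finset.univ.filter
          (fun p : (Fin N → Bool) × (Fin N → Bool) => ¬ p.1 = p.2),
        ((star (v p.1) ⬝ᵥ φ) * (starRingEnd ℂ) (star (v p.2) ⬝ᵥ φ)) *
          Complex.exp (-((E p.1 - E p.2 : ℝ) : ℂ) * Complex.I * t) *
          (Matrix.vecMulVec (v p.1) (star (v p.2)) *
            hatUnit N L (fun k => A.orderEmbOfFin hA k) y x).trace := by
    intro t
    funext x y
    rw [Matrix.sub_apply]
    simp only [fermRDM]
    have houter : outer N (evolve N H t φ) = ∑ j, ∑ k,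
        ((Complex.exp ((-(t:ℂ) * Complex.I) * (E j : ℂ)) * (star (v j) ⬝ᵥ φ)) *
          (starRingEnd ℂ) (Complex.exp ((-(t:ℂ) * Complex.I) * (E k : ℂ)) *
            (star (v k) ⬝ᵥ φ))) • Matrix.vecMulVec (v j) (star (v k)) := by
      rw [evolve_eq horth heig]
      ext u w
      simp only [outer, Matrix.vecMulVec_apply, Pi.star_apply, Matrix.sum_apply,
        Matrix.smul_apply, smul_eq_mul, Complex.star_def, _root_.map_sum, _root_.map_mul]
      rw [Finset.sum_mul]
      refine Finset.sum_congr rfl fun j _ => ?_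
      rw [Finset.mul_sum]
      refine Finset.sum_congr rfl fun k _ => by ring
    have h1 : ((outer N (evolve N H t φ)) *
        hatUnit N L (fun k => A.orderEmbOfFin hA k) y x).trace
        = ∑ j, ∑ k, ((Complex.exp ((-(t:ℂ) * Complex.I) * (E j:ℂ)) * (star (v j) ⬝ᵥ φ)) *
            (starRingEnd ℂ) (Complex.exp ((-(t:ℂ) * Complex.I) * (E k:ℂ)) *
              (star (v k) ⬝ᵥ φ))) *
            (Matrix.vecMulVec (v j) (star (v k)) *
              hatUnit N L (fun k => A.orderEmbOfFin hA k) y x).trace := by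
      rw [houter]
      simp only [Matrix.sum_mul, Matrix.smul_mul, Matrix.trace_sum, Matrix.trace_smul,
        smul_eq_mul]
    have h2 : ((∑ j, ((‖star (v j) ⬝ᵥ φ‖ ^ 2 : ℝ) : ℂ) • outer N (v j)) *
        hatUnit N L (fun k => A.orderEmbOfFin hA k) y x).trace =
        ∑ j, ((‖star (v j) ⬝ᵥ φ‖ ^ 2 : ℝ) : ℂ) *
          (Matrix.vecMulVec (v j) (star (v j)) *
            hatUnit N L (fun k => A.orderEmbOfFin hA k) y x).trace := by
      simp only [outer, Matrix.sum_mul, Matrix.smul_mul, Matrix.trace_sum, Matrix.trace_smul,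
        smul_eq_mul]
    rw [h1, h2]
    -- abbreviate the double-sum term
    set T : (Fin N → Bool) → (Fin N → Bool) → ℂ := fun j k =>
      ((Complex.exp ((-(t:ℂ) * Complex.I) * (E j:ℂ)) * (star (v j) ⬝ᵥ φ)) *
        (starRingEnd ℂ) (Complex.exp ((-(t:ℂ) * Complex.I) * (E k:ℂ)) *
          (star (v k) ⬝ᵥ φ))) *
        (Matrix.vecMulVec (v j) (star (v k)) *
          hatUnit N L (fun k => A.orderEmbOfFin hA k) y x).trace with hT
    have hsplit : ∑ j, ∑ k, T j k =
        (∑ p ∈ Finset.univ.filter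
          (fun p : (Fin N → Bool) × (Fin N → Bool) => ¬ p.1 = p.2), T p.1 p.2) +
        ∑ j, T j j := by
      rw [← Finset.sum_product', Finset.univ_product_univ,
        ← Finset.sum_filter_add_sum_filter_not Finset.univ
          (fun p : (Fin N → Bool) × (Fin N → Bool) => ¬ p.1 = p.2)]
      congr 1
      have hfilter : Finset.filter
          (fun p : (Fin N → Bool) × (Fin N → Bool) => ¬ ¬ p.1 = p.2) Finset.univ =
          Finset.filter (fun p : (Fin N → Bool) × (Fin N → Bool) => p.1 = p.2) Finset.univ :=
        Finset.filter_congr fun p _ => by simp [not_not]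
      rw [hfilter]
      refine Finset.sum_nbij' (fun p => p.1) (fun j => (j, j)) ?_ ?_ ?_ ?_ ?_
      · intro p _
        exact Finset.mem_univ _
      · intro j _
        simp
      · intro p hp
        simp only [Finset.mem_filter, Finset.mem_univ, true_and] at hp
        exact Prod.ext rfl hp
      · intro j _
        rfl
      · intro p hp
        simp only [Finset.mem_filter, Finset.mem_univ, true_and] at hp
        rw [← hp]
    have hdiag : ∀ j, T j j = ((‖star (v j) ⬝ᵥ φ‖ ^ 2 : ℝ) : ℂ) *
        (Matrix.vecMulVec (v j) (star (v j)) *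
          hatUnit N L (fun k => A.orderEmbOfFin hA k) y x).trace := by
      intro j
      simp only [hT]
      congr 1
      rw [_root_.map_mul, mul_mul_mul_comm, hE' t (E j) (E j), sub_self]
      simp only [Complex.ofReal_zero, neg_zero, zero_mul, Complex.exp_zero, one_mul]
      rw [Complex.mul_conj, Complex.normSq_eq_norm_sq]
    have hoff : ∀ p : (Fin N → Bool) × (Fin N → Bool), T p.1 p.2 =
        ((star (v p.1) ⬝ᵥ φ) * (starRingEnd ℂ) (star (v p.2) ⬝ᵥ φ)) *
          Complex.exp (-((E p.1 - E p.2 : ℝ) : ℂ) * Complex.I * t) *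
          (Matrix.vecMulVec (v p.1) (star (v p.2)) *
            hatUnit N L (fun k => A.orderEmbOfFin hA k) y x).trace := by
      intro p
      simp only [hT]
      rw [← hE' t (E p.1) (E p.2), _root_.map_mul]
      ring
    rw [hsplit, Finset.sum_congr rfl fun j _ => hdiag j, add_sub_cancel_right]
    exact Finset.sum_congr rfl fun p _ => hoff p
  have hfun : (fun τ : ℝ => (1 / τ) * ∫ t in (0:ℝ)..τ,
      frobSq (fermRDM N L A hA (outer N (evolve N H t φ)) -
        fermRDM N L A hA
          (∑ j, ((‖star (v j) ⬝ᵥ φ‖ ^ 2 : ℝ) : ℂ) • outer N (v j)))) =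
      (fun τ : ℝ => (1 / τ) * ∫ t in (0:ℝ)..τ,
      frobSq (fun x y => ∑ p ∈ Finset.univ.filter
          (fun p : (Fin N → Bool) × (Fin N → Bool) => ¬ p.1 = p.2),
        ((star (v p.1) ⬝ᵥ φ) * (starRingEnd ℂ) (star (v p.2) ⬝ᵥ φ)) *
          Complex.exp (-((E p.1 - E p.2 : ℝ) : ℂ) * Complex.I * t) *
          (Matrix.vecMulVec (v p.1) (star (v p.2)) *
            hatUnit N L (fun k => A.orderEmbOfFin hA k) y x).trace)) := by
    funext τ
    congr 1
    congr 1
    funext t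
    rw [hdiff t]
  rw [hfun]
  have hmb := main_bound (fun k => A.orderEmbOfFin hA k) hι E v horth hgapE
    (fun j => star (v j) ⬝ᵥ φ)
  refine le_trans hmb (le_of_eq ?_)
  rw [div_inv_eq_mul]
  congr 1
  exact Finset.sum_congr rfl fun j _ => by ring

end
end

section
/- Fix a constant ν ∈ (0, 1/2]. There exist constants C > 0 and N₀ such that for every even integer N ≥ N₀ and every odd integer n with |n − νN| ≤ 1, the following holds: | binom(N,n)^{−1} · Σ_{j=0}^{(n−1)/2} (n/2 − j) · binom(N/2, j) · binom(N/2, n−j) − √( n(N−n) / (8πN) ) | ≤ C/√N. In other words, binom(N,n)^{−1} Σ_{j=0}^{(n−1)/2} (n/2 − j) binom(N/2, j) binom(N/2, n−j) = √(ν(1−ν)N/(8π)) + O(1/√N) as N → ∞ with n/N → ν. -/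
open scoped Nat Real
open Filter

lemma le_of_sq_le_sq' {a b : ℝ} (ha : 0 ≤ a) (hb : 0 ≤ b) (h : a^2 ≤ b^2) : a ≤ b := by
  nlinarith [sq_nonneg (a - b), sq_nonneg (a + b)]

noncomputable def fcb (n : ℕ) : ℝ := (Nat.centralBinom n : ℝ) * Real.sqrt n / 4 ^ n
noncomputable def gcb (n : ℕ) : ℝ := (Nat.centralBinom n : ℝ) * Real.sqrt ((n:ℝ) + 1/2) / 4 ^ n

lemma fcb_eq (n : ℕ) (hn : 1 ≤ n) :
    fcb n = Stirling.stirlingSeq (2 * n) / (Stirling.stirlingSeq n) ^ 2 := by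
  have hn0 : (0:ℝ) < n := by exact_mod_cast hn
  unfold Stirling.stirlingSeq fcb
  rw [Nat.centralBinom]
  have hchoose : ((2 * n).choose n : ℝ) = ((2*n)! : ℝ) / ((n ! : ℝ) * (n ! : ℝ)) := by
    rw [Nat.cast_choose ℝ (by omega : n ≤ 2 * n)]
    congr 2
    norm_cast
    congr 1
    omega
  rw [hchoose]
  have h2n : ((2 * n : ℕ) : ℝ) = 2 * (n : ℝ) := by push_cast; ring
  rw [h2n]
  have hpow : ((2 * (n:ℝ)) / Real.exp 1) ^ (2 * n) = 4 ^ n * (((n:ℝ) / Real.exp 1) ^ n) ^ 2 := by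
    have h1 : (2 * (n:ℝ)) / Real.exp 1 = 2 * ((n:ℝ) / Real.exp 1) := by ring
    rw [h1, mul_pow, ← pow_mul, mul_comm 2 n, pow_mul, pow_mul]
    norm_num
    rw [← pow_mul, mul_comm n 2, pow_mul]
    norm_num
  rw [hpow]
  rw [div_pow ((n:ℝ))]
  have h4 : (0:ℝ) < 4 ^ n := by positivity
  have hen : (0:ℝ) < Real.exp 1 ^ n := by positivity
  have hnn : (0:ℝ) < (n:ℝ) ^ n := by positivity
  field_simp
  ring_nf
  rw [← Real.sqrt_mul hn0.le, Real.sq_sqrt (by positivity),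
    show (n:ℝ) * ((n:ℝ) * 4) = ((n:ℝ) * 2) ^ 2 by ring, Real.sqrt_sq (by positivity)]

lemma tendsto_fcb : Tendsto fcb atTop (nhds ((Real.sqrt π)⁻¹)) := by
  have hs := Stirling.tendsto_stirlingSeq_sqrt_pi
  have h2 : Tendsto (fun n => Stirling.stirlingSeq (2 * n)) atTop (nhds (Real.sqrt π)) :=
    hs.comp (tendsto_atTop_atTop_of_monotone (fun a b h => by omega)
      (fun b => ⟨b, by omega⟩))
  have hsq : Tendsto (fun n => (Stirling.stirlingSeq n) ^ 2) atTop (nhds (Real.sqrt π ^ 2)) :=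
    hs.pow 2
  have hπ : Real.sqrt π ^ 2 ≠ 0 := by
    have : (0:ℝ) < Real.sqrt π := Real.sqrt_pos.2 Real.pi_pos
    positivity
  have hlim : Tendsto (fun n => Stirling.stirlingSeq (2*n) / (Stirling.stirlingSeq n) ^ 2)
      atTop (nhds (Real.sqrt π / Real.sqrt π ^ 2)) := h2.div hsq hπ
  have heq : Real.sqrt π / Real.sqrt π ^ 2 = (Real.sqrt π)⁻¹ := by
    have : (0:ℝ) < Real.sqrt π := Real.sqrt_pos.2 Real.pi_pos
    field_simp
  rw [heq] at hlim
  apply hlim.congr'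
  filter_upwards [eventually_ge_atTop 1] with n hn
  exact (fcb_eq n hn).symm

lemma tendsto_gcb : Tendsto gcb atTop (nhds ((Real.sqrt π)⁻¹)) := by
  have h1 : Tendsto (fun n : ℕ => Real.sqrt (1 + 1/(2*(n:ℝ)))) atTop (nhds 1) := by
    have h0 : Tendsto (fun n : ℕ => 1 + 1/(2*(n:ℝ))) atTop (nhds 1) := by
      have := (tendsto_const_nhds (x := (1:ℝ)) (f := atTop (α := ℕ))).add
        (Tendsto.div_atTop (tendsto_const_nhds (x := (1:ℝ)))
          (tendsto_natCast_atTop_atTop.const_mul_atTop two_pos))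
      simpa using this
    have := (Real.continuous_sqrt.tendsto 1).comp h0
    rw [Real.sqrt_one] at this
    exact this
  have h2 := tendsto_fcb.mul h1
  rw [mul_one] at h2
  apply h2.congr'
  filter_upwards [eventually_ge_atTop 1] with n hn
  have hn0 : (0:ℝ) < n := by exact_mod_cast hn
  show fcb n * Real.sqrt (1 + 1/(2*(n:ℝ))) = gcb n
  unfold fcb gcb
  rw [div_mul_eq_mul_div, mul_assoc, ← Real.sqrt_mul hn0.le]
  congr 3
  field_simp

lemma cb_rec (n : ℕ) : ((n+1).centralBinom : ℝ) * ((n:ℝ)+1) = 2 * (2*(n:ℝ)+1) * (n.centralBinom : ℝ) := by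
  have h := congrArg (Nat.cast (R := ℝ)) (Nat.succ_mul_centralBinom_succ n)
  push_cast at h
  linear_combination h

lemma fcb_mono : Monotone fcb := by
  apply monotone_nat_of_le_succ
  intro n
  unfold fcb
  have hn0 : (0:ℝ) ≤ n := by positivity
  have hcb : (0:ℝ) < (n.centralBinom : ℝ) := by exact_mod_cast n.centralBinom_pos
  have h4 : (0:ℝ) < (4:ℝ) ^ n := by positivity
  have hkey : 2 * ((n:ℝ)+1) * Real.sqrt (n:ℝ) ≤ (2*(n:ℝ)+1) * Real.sqrt ((n:ℝ)+1) := by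
    apply le_of_sq_le_sq' (by positivity) (by positivity)
    have s1 : Real.sqrt (n:ℝ) ^ 2 = n := Real.sq_sqrt hn0
    have s2 : Real.sqrt ((n:ℝ)+1) ^ 2 = (n:ℝ)+1 := Real.sq_sqrt (by positivity)
    nlinarith [s1, s2, sq_nonneg ((n:ℝ))]
  rw [div_le_div_iff₀ (by positivity) (by positivity)]
  have hchain : (n.centralBinom:ℝ) * Real.sqrt n * 4^(n+1) * ((n:ℝ)+1)
      ≤ ((n+1).centralBinom:ℝ) * Real.sqrt ((n:ℝ)+1) * 4^n * ((n:ℝ)+1) := by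
    calc (n.centralBinom:ℝ) * Real.sqrt n * 4^(n+1) * ((n:ℝ)+1)
        = (2 * (n.centralBinom:ℝ) * 4^n) * (2*((n:ℝ)+1)*Real.sqrt n) := by ring
      _ ≤ (2 * (n.centralBinom:ℝ) * 4^n) * ((2*(n:ℝ)+1)*Real.sqrt ((n:ℝ)+1)) :=
          mul_le_mul_of_nonneg_left hkey (by positivity)
      _ = ((n+1).centralBinom:ℝ) * Real.sqrt ((n:ℝ)+1) * 4^n * ((n:ℝ)+1) := by
          linear_combination (-(Real.sqrt ((n:ℝ)+1) * 4^n)) * (cb_rec n)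
  have := le_of_mul_le_mul_right hchain (by positivity : (0:ℝ) < (n:ℝ)+1)
  push_cast at this ⊢
  linarith

lemma gcb_anti : Antitone gcb := by
  apply antitone_nat_of_succ_le
  intro n
  unfold gcb
  have hn0 : (0:ℝ) ≤ n := by positivity
  have hcb : (0:ℝ) < (n.centralBinom : ℝ) := by exact_mod_cast n.centralBinom_pos
  have hkey : (2*(n:ℝ)+1) * Real.sqrt (((n:ℝ)+1)+1/2) ≤ 2*((n:ℝ)+1) * Real.sqrt ((n:ℝ)+1/2) := by
    apply le_of_sq_le_sq' (by positivity) (by positivity)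
    have s1 : Real.sqrt (((n:ℝ)+1)+1/2) ^ 2 = ((n:ℝ)+1)+1/2 := Real.sq_sqrt (by positivity)
    have s2 : Real.sqrt ((n:ℝ)+1/2) ^ 2 = (n:ℝ)+1/2 := Real.sq_sqrt (by positivity)
    nlinarith [s1, s2, sq_nonneg ((n:ℝ))]
  rw [div_le_div_iff₀ (by positivity) (by positivity)]
  have hchain : ((n+1).centralBinom:ℝ) * Real.sqrt (((n:ℝ)+1)+1/2) * 4^n * ((n:ℝ)+1)
      ≤ (n.centralBinom:ℝ) * Real.sqrt ((n:ℝ)+1/2) * 4^(n+1) * ((n:ℝ)+1) := by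
    calc ((n+1).centralBinom:ℝ) * Real.sqrt (((n:ℝ)+1)+1/2) * 4^n * ((n:ℝ)+1)
        = ((n.centralBinom:ℝ) * 4^n) * ((2*(n:ℝ)+1) * Real.sqrt (((n:ℝ)+1)+1/2)) * 2 := by
          linear_combination (Real.sqrt (((n:ℝ)+1)+1/2) * 4^n) * (cb_rec n)
      _ ≤ ((n.centralBinom:ℝ) * 4^n) * (2*((n:ℝ)+1) * Real.sqrt ((n:ℝ)+1/2)) * 2 := by
          apply mul_le_mul_of_nonneg_right _ (by norm_num)
          exact mul_le_mul_of_nonneg_left hkey (by positivity)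
      _ = (n.centralBinom:ℝ) * Real.sqrt ((n:ℝ)+1/2) * 4^(n+1) * ((n:ℝ)+1) := by ring
  have := le_of_mul_le_mul_right hchain (by positivity : (0:ℝ) < (n:ℝ)+1)
  push_cast at this ⊢
  linarith

lemma cb_upper (m : ℕ) : (Nat.centralBinom m : ℝ) * Real.sqrt m ≤ 4 ^ m / Real.sqrt π := by
  have h := fcb_mono.ge_of_tendsto tendsto_fcb m
  unfold fcb at h
  have h4 : (0:ℝ) < (4:ℝ) ^ m := by positivity
  rw [div_le_iff₀ h4] at h
  rw [div_eq_mul_inv, mul_comm ((4:ℝ)^m)]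
  exact h

lemma cb_lower (m : ℕ) : 4 ^ m / Real.sqrt π ≤ (Nat.centralBinom m : ℝ) * Real.sqrt ((m:ℝ) + 1/2) := by
  have h := gcb_anti.le_of_tendsto tendsto_gcb m
  unfold gcb at h
  have h4 : (0:ℝ) < (4:ℝ) ^ m := by positivity
  rw [le_div_iff₀ h4] at h
  rw [div_eq_mul_inv, mul_comm ((4:ℝ)^m)]
  exact h
open Finset
open scoped Nat

lemma choose_cast_succ_mul (m k : ℕ) :
    ((m:ℝ)+1) * (m.choose k : ℝ) = ((k:ℝ)+1) * ((m+1).choose (k+1) : ℝ) := by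
  have h := congrArg (Nat.cast (R := ℝ)) (Nat.add_one_mul_choose_eq m k)
  push_cast at h
  linarith

lemma pascal_cast (m k : ℕ) :
    (((m+1).choose (k+1) : ℕ) : ℝ) = (m.choose k : ℝ) + (m.choose (k+1) : ℝ) := by
  rw [Nat.choose_succ_succ]
  push_cast
  ring

lemma key_step (m i r : ℕ) :
    (((i:ℝ)+r+2) - 2*((i:ℝ)+1)) * ((m+1).choose (i+1) : ℝ) * ((m+1).choose (r+1) : ℝ)
      = ((m:ℝ)+1) * ((m.choose (i+1) : ℝ) * (m.choose r : ℝ))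
        - ((m:ℝ)+1) * ((m.choose i : ℝ) * (m.choose (r+1) : ℝ)) := by
  have e1 := choose_cast_succ_mul m r
  have e2 := choose_cast_succ_mul m i
  rw [pascal_cast m r] at e1
  rw [pascal_cast m i] at e2
  rw [pascal_cast m i, pascal_cast m r]
  linear_combination (-(((m.choose i : ℝ)) + (m.choose (i+1) : ℝ))) * e1
    + ((m.choose r : ℝ) + (m.choose (r+1) : ℝ)) * e2

/-- Telescoping evaluation of the weighted Vandermonde sum. -/
lemma tele_sum (M n K : ℕ) (hM : 1 ≤ M) (hn : 1 ≤ n) (hK : K + 1 ≤ n) :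
    ∑ j ∈ Finset.range (K+1), ((n:ℝ) - 2*(j:ℝ)) * (M.choose j : ℝ) * (M.choose (n-j) : ℝ)
      = (M:ℝ) * ((M-1).choose K : ℝ) * ((M-1).choose (n-1-K) : ℝ) := by
  induction K with
  | zero =>
      rw [Finset.sum_range_succ, Finset.sum_range_zero, zero_add]
      simp only [Nat.sub_zero]
      obtain ⟨m, rfl⟩ : ∃ m, M = m + 1 := ⟨M - 1, by omega⟩
      obtain ⟨p, rfl⟩ : ∃ p, n = p + 1 := ⟨n - 1, by omega⟩
      have h := choose_cast_succ_mul m p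
      simp only [Nat.add_sub_cancel, Nat.choose_zero_right]
      push_cast
      push_cast at h
      linarith [h]
  | succ K ih =>
      rw [Finset.sum_range_succ, ih (by omega)]
      obtain ⟨m, rfl⟩ : ∃ m, M = m + 1 := ⟨M - 1, by omega⟩
      obtain ⟨r, hr⟩ : ∃ r, n = K + r + 2 := ⟨n - K - 2, by omega⟩
      subst hr
      have h := key_step m K r
      have h1 : (K + r + 2) - (K+1) = r + 1 := by omega
      have h2 : (K + r + 2) - 1 - K = r + 1 := by omega
      have h3 : (K + r + 2) - 1 - (K+1) = r := by omega
      have h4 : m + 1 - 1 = m := by omega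
      rw [h1, h2, h3, h4]
      push_cast
      push_cast at h
      linarith [h]
open scoped Nat

lemma ratio_id (a b : ℕ) :
    (((2*(a+b+1)).choose (2*a+1) : ℝ))⁻¹ * (((a:ℝ)+(b:ℝ)+1)/2 * ((a+b).choose a : ℝ)^2)
      = ((2*(a:ℝ)+1) * (2*(b:ℝ)+1)) / (4*(2*((a:ℝ)+(b:ℝ))+1)) *
        ((Nat.centralBinom a : ℝ) * (Nat.centralBinom b : ℝ) / (Nat.centralBinom (a+b) : ℝ)) := by
  have c1 : ((a+b).choose a : ℝ) = ((a+b)! : ℝ) / ((a ! : ℝ) * (b ! : ℝ)) := by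
    rw [Nat.cast_choose ℝ (Nat.le_add_right a b), Nat.add_sub_cancel_left]
  have c2 : (Nat.centralBinom a : ℝ) = ((2*a)! : ℝ) / ((a ! : ℝ) * (a ! : ℝ)) := by
    rw [Nat.centralBinom, Nat.cast_choose ℝ (by omega : a ≤ 2*a),
      show 2*a - a = a by omega]
  have c3 : (Nat.centralBinom b : ℝ) = ((2*b)! : ℝ) / ((b ! : ℝ) * (b ! : ℝ)) := by
    rw [Nat.centralBinom, Nat.cast_choose ℝ (by omega : b ≤ 2*b),
      show 2*b - b = b by omega]
  have c4 : (Nat.centralBinom (a+b) : ℝ) = ((2*(a+b))! : ℝ) / (((a+b) ! : ℝ) * ((a+b) ! : ℝ)) := by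
    rw [Nat.centralBinom, Nat.cast_choose ℝ (by omega : a+b ≤ 2*(a+b)),
      show 2*(a+b) - (a+b) = a+b by omega]
  have c5 : (((2*(a+b+1)).choose (2*a+1)) : ℝ)
      = ((2*(a+b+1))! : ℝ) / (((2*a+1) ! : ℝ) * ((2*b+1) ! : ℝ)) := by
    rw [Nat.cast_choose ℝ (by omega : 2*a+1 ≤ 2*(a+b+1)),
      show 2*(a+b+1) - (2*a+1) = 2*b+1 by omega]
  have f1 : ((2*(a+b+1))! : ℝ) = (2*(a:ℝ)+2*b+2) * (2*(a:ℝ)+2*b+1) * ((2*(a+b))! : ℝ) := by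
    have e : 2*(a+b+1) = (2*(a+b)+1)+1 := by omega
    rw [e, Nat.factorial_succ, Nat.factorial_succ]
    push_cast
    ring
  have f2 : ((2*a+1)! : ℝ) = (2*(a:ℝ)+1) * ((2*a)! : ℝ) := by
    rw [Nat.factorial_succ]; push_cast; ring
  have f3 : ((2*b+1)! : ℝ) = (2*(b:ℝ)+1) * ((2*b)! : ℝ) := by
    rw [Nat.factorial_succ]; push_cast; ring
  rw [c1, c2, c3, c4, c5, f1, f2, f3]
  have p1 : (0:ℝ) < (a ! : ℝ) := by exact_mod_cast a.factorial_pos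
  have p2 : (0:ℝ) < (b ! : ℝ) := by exact_mod_cast b.factorial_pos
  have p3 : (0:ℝ) < ((a+b) ! : ℝ) := by exact_mod_cast (a+b).factorial_pos
  have p4 : (0:ℝ) < ((2*a) ! : ℝ) := by exact_mod_cast (2*a).factorial_pos
  have p5 : (0:ℝ) < ((2*b) ! : ℝ) := by exact_mod_cast (2*b).factorial_pos
  have p6 : (0:ℝ) < ((2*(a+b)) ! : ℝ) := by exact_mod_cast (2*(a+b)).factorial_pos
  have p7 : (0:ℝ) < 2*(a:ℝ)+2*b+2 := by positivity
  have p8 : (0:ℝ) < 2*(a:ℝ)+2*b+1 := by positivity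
  have p9 : (0:ℝ) < 2*(a:ℝ)+1 := by positivity
  have p10 : (0:ℝ) < 2*(b:ℝ)+1 := by positivity
  field_simp
  ring

open Finset
open scoped Classical

noncomputable section

set_option maxHeartbeats 2000000 in
/-- Asymptotics of the half-weighted binomial sum appearing in the `f = 1/2`
entanglement entropy correction. -/
theorem half_weighted_binomial_sum_asymptotics (ν : ℝ) (hν : ν ∈ Set.Ioc 0 (1/2)) :
    ∃ C : ℝ, 0 < C ∧ ∃ N₀ : ℕ, ∀ N : ℕ, N₀ ≤ N → Even N →
    ∀ n : ℕ, Odd n → |(n : ℝ) - ν * N| ≤ 1 →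
    |(N.choose n : ℝ)⁻¹ * (∑ j ∈ Finset.range ((n - 1) / 2 + 1),
        ((n : ℝ) / 2 - j) * ((N / 2).choose j : ℝ) * ((N / 2).choose (n - j) : ℝ))
      - Real.sqrt ((n : ℝ) * ((N : ℝ) - n) / (8 * Real.pi * N))| ≤ C / Real.sqrt N := by
  obtain ⟨hνpos, hν2⟩ := hν
  refine ⟨8/ν, by positivity, ⌈16/ν⌉₊ + 64, ?_⟩
  intro N hN₀ hNeven n hodd hdev
  -- basic structure
  obtain ⟨M, hNM⟩ : ∃ M, N = 2 * M := by rcases hNeven with ⟨m, hm⟩; exact ⟨m, by omega⟩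
  obtain ⟨k, hnk⟩ : ∃ k, n = 2 * k + 1 := by rcases hodd with ⟨m, hm⟩; exact ⟨m, by omega⟩
  -- numeric setup
  have hπ : (0:ℝ) < Real.pi := Real.pi_pos
  have hπ1 : (1:ℝ) ≤ Real.pi := by linarith [Real.pi_gt_three]
  have hceil : (16:ℝ)/ν ≤ (⌈16/ν⌉₊ : ℝ) := Nat.le_ceil _
  have hNge : (⌈16/ν⌉₊ + 64 : ℕ) ≤ N := hN₀
  have hN64 : (64:ℕ) ≤ N := by omega
  have hM32 : (32:ℕ) ≤ M := by omega
  have hMr32 : (32:ℝ) ≤ (M:ℝ) := by exact_mod_cast hM32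
  have hMrpos : (0:ℝ) < (M:ℝ) := by linarith
  have hNr : (N:ℝ) = 2 * (M:ℝ) := by exact_mod_cast congrArg (Nat.cast (R := ℝ)) hNM
  have hNcast : ((⌈16/ν⌉₊ + 64 : ℕ) : ℝ) ≤ (N:ℝ) := by exact_mod_cast hNge
  have hNν : (16:ℝ)/ν ≤ (N:ℝ) := by
    push_cast at hNcast
    linarith
  have hMν : (8:ℝ)/ν ≤ (M:ℝ) := by
    have h16 : (16:ℝ)/ν = 2*(8/ν) := by ring
    rw [h16] at hNν
    linarith
  have hνM : (8:ℝ) ≤ ν * (M:ℝ) := by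
    have := mul_le_mul_of_nonneg_left hMν (le_of_lt hνpos)
    rw [mul_div_cancel₀ _ (ne_of_gt hνpos)] at this
    linarith
  have hnr : (n:ℝ) = 2 * (k:ℝ) + 1 := by exact_mod_cast congrArg (Nat.cast (R := ℝ)) hnk
  have hdev' := abs_le.1 hdev
  have hk_up : (k:ℝ) ≤ ν * (M:ℝ) := by
    rw [hnr, hNr] at hdev'
    nlinarith [hdev'.2]
  have hk_low : ν * (M:ℝ)/2 ≤ (k:ℝ) := by
    rw [hnr, hNr] at hdev'
    nlinarith [hdev'.1]
  have hk4 : (4:ℝ) ≤ (k:ℝ) := by linarith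
  have hkM2 : (k:ℝ) ≤ (M:ℝ)/2 := by nlinarith
  have hkM : k + 2 ≤ M := by
    have : ((k:ℝ)) + 2 ≤ (M:ℝ) := by linarith
    exact_mod_cast this
  set b : ℕ := M - 1 - k with hbdef
  have hb : M = k + b + 1 := by omega
  have hbr : (b:ℝ) = (M:ℝ) - 1 - (k:ℝ) := by
    have : (M:ℝ) = (k:ℝ) + (b:ℝ) + 1 := by exact_mod_cast congrArg (Nat.cast (R := ℝ)) hb
    linarith
  have hb_low : (M:ℝ)/4 ≤ (b:ℝ) := by rw [hbr]; linarith
  have hb1 : (1:ℝ) ≤ (b:ℝ) := by linarith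
  -- the exact identity
  have hhalf : (n - 1)/2 = k := by omega
  have hN2 : N/2 = M := by omega
  have hsum : (∑ j ∈ Finset.range ((n - 1) / 2 + 1),
        ((n : ℝ) / 2 - j) * ((N / 2).choose j : ℝ) * ((N / 2).choose (n - j) : ℝ))
      = ((k:ℝ)+(b:ℝ)+1)/2 * (((k+b).choose k : ℝ))^2 := by
    rw [hhalf, hN2]
    have htele := tele_sum M n k (by omega) (by omega) (by omega)
    have hstep : (∑ j ∈ Finset.range (k + 1),
        ((n : ℝ) / 2 - j) * ((M).choose j : ℝ) * ((M).choose (n - j) : ℝ))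
        = (1/2) * ∑ j ∈ Finset.range (k+1),
            ((n:ℝ) - 2*(j:ℝ)) * (M.choose j : ℝ) * (M.choose (n-j) : ℝ) := by
      rw [Finset.mul_sum]
      apply Finset.sum_congr rfl
      intro j _
      ring
    rw [hstep, htele]
    have h1 : n - 1 - k = k := by omega
    have h2 : M - 1 = k + b := by omega
    rw [h1, h2]
    have : (M:ℝ) = (k:ℝ) + (b:ℝ) + 1 := by exact_mod_cast congrArg (Nat.cast (R := ℝ)) hb
    rw [this]
    ring
  have hchoose_eq : N.choose n = (2*(k+b+1)).choose (2*k+1) := by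
    congr 1 <;> omega
  have hE : (N.choose n : ℝ)⁻¹ * (∑ j ∈ Finset.range ((n - 1) / 2 + 1),
        ((n : ℝ) / 2 - j) * ((N / 2).choose j : ℝ) * ((N / 2).choose (n - j) : ℝ))
      = ((2*(k:ℝ)+1) * (2*(b:ℝ)+1)) / (4*(2*((k:ℝ)+(b:ℝ))+1)) *
        ((Nat.centralBinom k : ℝ) * (Nat.centralBinom b : ℝ) / (Nat.centralBinom (k+b) : ℝ)) := by
    rw [hsum, hchoose_eq]
    exact ratio_id k b
  rw [hE]
  clear hE hsum hchoose_eq hdev hodd hNeven hN₀ hNge hceil hNcast hNν hhalf hN2 hnk hNM hdev' hN64 hM32 hbdef hkM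
  -- abbreviations
  set Mr : ℝ := (M:ℝ) with hMrdef
  set kr : ℝ := (k:ℝ) with hkrdef
  set br : ℝ := (b:ℝ) with hbrdef
  set A : ℝ := (2*kr+1) * (2*br+1) with hAdef
  set B : ℝ := A / (4*(2*(kr+br)+1)) with hBdef
  set ck : ℝ := (Nat.centralBinom k : ℝ) with hckdef
  set cbb : ℝ := (Nat.centralBinom b : ℝ) with hcbbdef
  set cab : ℝ := (Nat.centralBinom (k+b) : ℝ) with hcabdef
  set T : ℝ := Real.sqrt ((n:ℝ) * ((N:ℝ) - n) / (8 * Real.pi * N)) with hTdef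
  set sπ : ℝ := Real.sqrt Real.pi with hsπdef
  set sk : ℝ := Real.sqrt kr with hskdef
  set sb : ℝ := Real.sqrt br with hsbdef
  set sk2 : ℝ := Real.sqrt (kr + 1/2) with hsk2def
  set sb2 : ℝ := Real.sqrt (br + 1/2) with hsb2def
  set sM1 : ℝ := Real.sqrt (Mr - 1) with hsM1def
  set sM2 : ℝ := Real.sqrt (Mr - 1/2) with hsM2def
  set sM : ℝ := Real.sqrt Mr with hsMdef
  set sN : ℝ := Real.sqrt (N:ℝ) with hsNdef
  set u : ℝ := 1/(ν*Mr) with hudef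
  set d : ℝ := 8*u with hddef
  -- positivity and square facts
  have hπs : 0 < sπ := Real.sqrt_pos.2 hπ
  have hπsq : sπ^2 = Real.pi := Real.sq_sqrt hπ.le
  have hkrpos : (0:ℝ) < kr := by linarith
  have hbrpos : (0:ℝ) < br := by linarith
  have hskpos : 0 < sk := Real.sqrt_pos.2 hkrpos
  have hsksq : sk^2 = kr := Real.sq_sqrt hkrpos.le
  have hsbpos : 0 < sb := Real.sqrt_pos.2 hbrpos
  have hsbsq : sb^2 = br := Real.sq_sqrt hbrpos.le
  have hsk2pos : 0 < sk2 := Real.sqrt_pos.2 (by linarith)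
  have hsk2sq : sk2^2 = kr + 1/2 := Real.sq_sqrt (by linarith)
  have hsb2pos : 0 < sb2 := Real.sqrt_pos.2 (by linarith)
  have hsb2sq : sb2^2 = br + 1/2 := Real.sq_sqrt (by linarith)
  have hsM1pos : 0 < sM1 := Real.sqrt_pos.2 (by linarith)
  have hsM1sq : sM1^2 = Mr - 1 := Real.sq_sqrt (by linarith)
  have hsM2pos : 0 < sM2 := Real.sqrt_pos.2 (by linarith)
  have hsM2sq : sM2^2 = Mr - 1/2 := Real.sq_sqrt (by linarith)
  have hsMpos : 0 < sM := Real.sqrt_pos.2 (by linarith)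
  have hsMsq : sM^2 = Mr := Real.sq_sqrt (by linarith)
  have hsNpos : 0 < sN := Real.sqrt_pos.2 (by rw [hNr]; linarith)
  have hsNsq : sN^2 = 2*Mr := by rw [hsNdef, Real.sq_sqrt (by rw [hNr]; linarith : (0:ℝ) ≤ (N:ℝ)), hNr]
  have hckpos : (0:ℝ) < ck := by rw [hckdef]; exact_mod_cast k.centralBinom_pos
  have hcbbpos : (0:ℝ) < cbb := by rw [hcbbdef]; exact_mod_cast b.centralBinom_pos
  have hcabpos : (0:ℝ) < cab := by rw [hcabdef]; exact_mod_cast (k+b).centralBinom_pos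
  have hApos : (0:ℝ) < A := by
    rw [hAdef]; exact mul_pos (by linarith) (by linarith)
  have hBpos : (0:ℝ) < B := by
    rw [hBdef]; exact div_pos hApos (by linarith)
  have hνMrpos : (0:ℝ) < ν * Mr := mul_pos hνpos hMrpos
  have hupos : (0:ℝ) < u := by
    rw [hudef]; exact div_pos one_pos hνMrpos
  have hu8 : u ≤ 1/8 := by
    rw [hudef, div_le_div_iff₀ hνMrpos (by norm_num)]
    linarith
  have huν : ν * Mr * u = 1 := by
    rw [hudef]
    field_simp
  have hMru : Mr * u = 1/ν := by
    rw [hudef]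
    field_simp
  have hν1 : (2:ℝ) ≤ 1/ν := by
    rw [le_div_iff₀ hνpos]
    linarith
  have hdpos : (0:ℝ) < d := by rw [hddef]; linarith
  have hd1 : d ≤ 1 := by
    rw [hddef]
    linarith
  have hTnonneg : 0 ≤ T := by rw [hTdef]; exact Real.sqrt_nonneg _
  have h2M1 : (0:ℝ) < 2*Mr-1 := by linarith
  have hkb : 2*(kr+br)+1 = 2*Mr-1 := by rw [hbr]; ring
  -- central binomial bounds
  have m1 : ck * sk ≤ 4^k / sπ := by
    rw [hckdef, hskdef, hsπdef, hkrdef]; exact cb_upper k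
  have m2 : cbb * sb ≤ 4^b / sπ := by
    rw [hcbbdef, hsbdef, hsπdef, hbrdef]; exact cb_upper b
  have m3 : 4^(k+b) / sπ ≤ cab * sM2 := by
    have h := cb_lower (k+b)
    have harg : ((k+b:ℕ):ℝ) + 1/2 = Mr - 1/2 := by
      push_cast
      rw [← hkrdef, ← hbrdef]
      rw [hbr]; ring
    rw [harg] at h
    rw [hcabdef, hsM2def, hsπdef]
    exact h
  have m4 : cab * sM1 ≤ 4^(k+b) / sπ := by
    have h := cb_upper (k+b)
    have harg : ((k+b:ℕ):ℝ) = Mr - 1 := by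
      push_cast
      rw [← hkrdef, ← hbrdef]
      rw [hbr]; ring
    rw [harg] at h
    rw [hcabdef, hsM1def, hsπdef]
    exact h
  have m5 : 4^k / sπ ≤ ck * sk2 := by
    rw [hckdef, hsk2def, hsπdef, hkrdef]; exact cb_lower k
  have m6 : 4^b / sπ ≤ cbb * sb2 := by
    rw [hcbbdef, hsb2def, hsπdef, hbrdef]; exact cb_lower b
  have hden1 : (0:ℝ) < sπ * sk * sb := mul_pos (mul_pos hπs hskpos) hsbpos
  have hden2 : (0:ℝ) < sπ * sk2 * sb2 := mul_pos (mul_pos hπs hsk2pos) hsb2pos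
  have hpowpos : ∀ m : ℕ, (0:ℝ) < 4^m := fun m => by positivity
  -- E ≤ U
  have hPU : ck * cbb / cab ≤ sM2 / (sπ * sk * sb) := by
    rw [div_le_div_iff₀ hcabpos hden1]
    calc ck * cbb * (sπ * sk * sb) = sπ * ((ck * sk) * (cbb * sb)) := by ring
      _ ≤ sπ * ((4^k/sπ) * (4^b/sπ)) := by
          apply mul_le_mul_of_nonneg_left _ hπs.le
          exact mul_le_mul m1 m2 (mul_nonneg hcbbpos.le hsbpos.le)
            (div_nonneg (hpowpos k).le hπs.le)
      _ = 4^(k+b)/sπ := by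
          rw [pow_add]
          field_simp
      _ ≤ cab * sM2 := m3
      _ = sM2 * cab := by ring
  have hEU : B * (ck*cbb/cab) ≤ B * (sM2/(sπ*sk*sb)) :=
    mul_le_mul_of_nonneg_left hPU hBpos.le
  have hUnonneg : 0 ≤ B * (sM2/(sπ*sk*sb)) :=
    mul_nonneg hBpos.le (div_nonneg hsM2pos.le hden1.le)
  -- T squared
  have h16πM : (0:ℝ) < 16*Real.pi*Mr := by positivity
  have hT2 : T^2 = A / (16*Real.pi*Mr) := by
    have harg : (n:ℝ) * ((N:ℝ) - n) / (8*Real.pi*(N:ℝ)) = A / (16*Real.pi*Mr) := by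
      rw [hnr, hNr, hAdef, hbr]
      field_simp
      ring
    rw [hTdef, harg, Real.sq_sqrt (le_of_lt (div_pos hApos h16πM))]
  -- core polynomial inequality
  have h1 : 2*kr+1 ≤ 2*kr*(1+u) := by
    nlinarith only [mul_le_mul_of_nonneg_right hk_low hupos.le, huν]
  have h2 : 2*br+1 ≤ 2*br*(1+2*u) := by
    nlinarith only [mul_le_mul_of_nonneg_right hb_low hupos.le, hMru, hν1]
  have h3 : 2*Mr ≤ (2*Mr-1)*(1+u) := by
    nlinarith only [hMru, hν1, hupos, hMr32, hu8]
  have h4 : (1+u)^2*(1+2*u) ≤ 1+8*u := by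
    nlinarith only [hupos.le, hu8, sq_nonneg u,
      mul_nonneg (by linarith : (0:ℝ) ≤ 1/8 - u) (sq_nonneg u),
      mul_nonneg (by linarith : (0:ℝ) ≤ 1/8 - u) hupos.le]
  have h5 : 1+8*u ≤ (1+d)^2 := by
    rw [hddef]; nlinarith only [hupos.le, sq_nonneg u]
  have hc1 : ((2*kr+1)*(2*br+1))*((2*Mr-1)*(2*Mr))
      ≤ ((2*kr*(1+u))*(2*br*(1+2*u)))*((2*Mr-1)*((2*Mr-1)*(1+u))) := by
    have p1 : (2*kr+1)*(2*br+1) ≤ (2*kr*(1+u))*(2*br*(1+2*u)) :=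
      mul_le_mul h1 h2 (by linarith) (mul_nonneg (by linarith : (0:ℝ) ≤ 2*kr) (by linarith : (0:ℝ) ≤ 1+u))
    have p2 : (2*Mr-1)*(2*Mr) ≤ (2*Mr-1)*((2*Mr-1)*(1+u)) :=
      mul_le_mul_of_nonneg_left h3 (by linarith)
    exact mul_le_mul p1 p2 (mul_nonneg (by linarith) (by linarith))
      (mul_nonneg (mul_nonneg (by linarith : (0:ℝ) ≤ 2*kr) (by linarith : (0:ℝ) ≤ 1+u))
        (mul_nonneg (by linarith : (0:ℝ) ≤ 2*br) (by linarith : (0:ℝ) ≤ 1+2*u)))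
  have hkbM : (0:ℝ) ≤ kr*br*(2*Mr-1)^2 := by
    apply mul_nonneg (mul_nonneg hkrpos.le hbrpos.le) (sq_nonneg _)
  have core : A*((Mr-1/2)*Mr) ≤ (1+d)^2*((2*Mr-1)^2*(kr*br)) := by
    have hc2 : (kr*br*(2*Mr-1)^2)*((1+u)^2*(1+2*u)) ≤ (kr*br*(2*Mr-1)^2)*(1+8*u) :=
      mul_le_mul_of_nonneg_left h4 hkbM
    have hc3 : (kr*br*(2*Mr-1)^2)*(1+8*u) ≤ (kr*br*(2*Mr-1)^2)*((1+d)^2) :=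
      mul_le_mul_of_nonneg_left h5 hkbM
    calc A*((Mr-1/2)*Mr) = (((2*kr+1)*(2*br+1))*((2*Mr-1)*(2*Mr)))/4 := by
          rw [hAdef]; ring
      _ ≤ (((2*kr*(1+u))*(2*br*(1+2*u)))*((2*Mr-1)*((2*Mr-1)*(1+u))))/4 := by
          linarith [hc1]
      _ = (kr*br*(2*Mr-1)^2)*((1+u)^2*(1+2*u)) := by ring
      _ ≤ (kr*br*(2*Mr-1)^2)*(1+8*u) := hc2
      _ ≤ (kr*br*(2*Mr-1)^2)*((1+d)^2) := hc3
      _ = (1+d)^2*((2*Mr-1)^2*(kr*br)) := by ring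
  -- U ≤ T(1+d)
  have hUT : B * (sM2/(sπ*sk*sb)) ≤ T * (1+d) := by
    refine le_of_sq_le_sq' hUnonneg (mul_nonneg hTnonneg (by linarith)) ?_
    have hq1 : (sπ*sk*sb)^2 = Real.pi*kr*br := by
      rw [mul_pow, mul_pow, hπsq, hsksq, hsbsq]
    have lhs_eq : (B * (sM2/(sπ*sk*sb)))^2
        = A^2*(Mr-1/2) / ((4*(2*Mr-1))^2*(Real.pi*kr*br)) := by
      rw [hBdef, hkb, mul_pow, div_pow, div_pow, hq1, hsM2sq]
      field_simp
      try ring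
      try exact Or.inl trivial
    have rhs_eq : (T*(1+d))^2 = A*(1+d)^2/(16*Real.pi*Mr) := by
      rw [mul_pow, hT2]; ring
    rw [lhs_eq, rhs_eq, div_le_div_iff₀
      (mul_pos (pow_pos (by linarith) 2) (mul_pos (mul_pos hπ hkrpos) hbrpos)) h16πM]
    calc A^2*(Mr-1/2)*(16*Real.pi*Mr) = (16*Real.pi*A)*(A*((Mr-1/2)*Mr)) := by ring
      _ ≤ (16*Real.pi*A)*((1+d)^2*((2*Mr-1)^2*(kr*br))) :=
          mul_le_mul_of_nonneg_left core
            (mul_nonneg (mul_nonneg (by norm_num) hπ.le) hApos.le)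
      _ = A*(1+d)^2*((4*(2*Mr-1))^2*(Real.pi*kr*br)) := by ring
  have hET : B * (ck*cbb/cab) ≤ T*(1+d) := le_trans hEU hUT
  -- T ≤ sM/4
  have hAleM2 : A ≤ Mr^2 := by
    have hMkb : Mr = kr+br+1 := by linarith [hbr]
    have hM2 : Mr^2 = (kr+br+1)^2 := by rw [hMkb]
    rw [hAdef]
    nlinarith only [sq_nonneg (kr - br), hM2]
  have hTle : T ≤ sM/4 := by
    refine le_of_sq_le_sq' hTnonneg (by linarith [hsMpos]) ?_
    rw [hT2, div_pow, hsMsq]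
    rw [div_le_div_iff₀ h16πM (by norm_num : (0:ℝ) < 4^2)]
    nlinarith only [hAleM2, mul_le_mul_of_nonneg_right hπ1 (mul_nonneg hMrpos.le hMrpos.le)]
  have hsNle : sN ≤ 2*sM := by
    refine le_of_sq_le_sq' hsNpos.le (by linarith) ?_
    rw [mul_pow, hsNsq, hsMsq]
    nlinarith only [hMrpos]
  -- upper bound conclusion
  have hup1 : B * (ck*cbb/cab) - T ≤ T*d := by nlinarith only [hET]
  have hup2 : T*d ≤ (sM/4)*d := mul_le_mul_of_nonneg_right hTle hdpos.le
  have hprodMN : sM*sN ≤ 2*Mr := by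
    calc sM*sN ≤ sM*(2*sM) := mul_le_mul_of_nonneg_left hsNle hsMpos.le
      _ = 2*sM^2 := by ring
      _ = 2*Mr := by rw [hsMsq]
  have hup3 : (sM/4)*d ≤ 4/(ν*sN) := by
    have heq1 : (sM/4)*d = 2*sM/(ν*Mr) := by
      rw [hddef, hudef]
      ring
    rw [heq1, div_le_div_iff₀ hνMrpos (mul_pos hνpos hsNpos)]
    nlinarith only [mul_le_mul_of_nonneg_left hprodMN hνpos.le]
  have hup : B * (ck*cbb/cab) - T ≤ 8/ν/sN := by
    have hsplit : (8:ℝ)/ν/sN = 8/(ν*sN) := by rw [div_div]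
    have h48 : (4:ℝ)/(ν*sN) ≤ 8/(ν*sN) :=
      (div_le_div_iff_of_pos_right (mul_pos hνpos hsNpos)).2 (by norm_num)
    rw [hsplit]
    linarith only [hup1, hup2, hup3, h48]
  -- lower direction
  have hPL : sM1/(sπ*sk2*sb2) ≤ ck*cbb/cab := by
    rw [div_le_div_iff₀ hden2 hcabpos]
    calc sM1*cab = cab*sM1 := by ring
      _ ≤ 4^(k+b)/sπ := m4
      _ = sπ*((4^k/sπ)*(4^b/sπ)) := by
          rw [pow_add]
          field_simp
      _ ≤ sπ*((ck*sk2)*(cbb*sb2)) := by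
          apply mul_le_mul_of_nonneg_left _ hπs.le
          exact mul_le_mul m5 m6 (div_nonneg (hpowpos b).le hπs.le)
            (mul_nonneg hckpos.le hsk2pos.le)
      _ = ck*cbb*(sπ*sk2*sb2) := by ring
  have hLE : B*(sM1/(sπ*sk2*sb2)) ≤ B*(ck*cbb/cab) :=
    mul_le_mul_of_nonneg_left hPL hBpos.le
  have hLnonneg : 0 ≤ B*(sM1/(sπ*sk2*sb2)) :=
    mul_nonneg hBpos.le (div_nonneg hsM1pos.le hden2.le)
  have hq2 : (sπ*sk2*sb2)^2 = Real.pi*(kr+1/2)*(br+1/2) := by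
    rw [mul_pow, mul_pow, hπsq, hsk2sq, hsb2sq]
  have hL2 : (B*(sM1/(sπ*sk2*sb2)))^2
      = A^2*(Mr-1) / ((4*(2*Mr-1))^2*(Real.pi*(kr+1/2)*(br+1/2))) := by
    rw [hBdef, hkb, mul_pow, div_pow, div_pow, hq2, hsM1sq]
    field_simp
    try ring
    try exact Or.inl trivial
  have heqTL : T^2*(4*Mr*(Mr-1)) = (B*(sM1/(sπ*sk2*sb2)))^2*(2*Mr-1)^2 := by
    rw [hT2, hL2, hAdef]
    have d1 : (Real.pi:ℝ) ≠ 0 := hπ.ne'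
    have d2 : Mr ≠ 0 := hMrpos.ne'
    have d3 : (2*Mr-1) ≠ 0 := by intro hcon; linarith only [hcon, hMr32]
    have d4 : (kr+1/2) ≠ 0 := by intro hcon; linarith only [hcon, hkrpos]
    have d5 : (br+1/2) ≠ 0 := by intro hcon; linarith only [hcon, hbrpos]
    field_simp
    ring
  have hsqkey : ∀ w : ℝ, 0 ≤ w → w ≤ Mr →
      w^2*(2*Mr-1)^2 ≤ (w+1)^2*(4*Mr*(Mr-1)) := by
    intro w hw0 hwM
    nlinarith only [hw0, hwM, hMr32, mul_le_mul_of_nonneg_left hwM hw0,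
      mul_nonneg (mul_nonneg hw0 hMrpos.le) (by linarith : (0:ℝ) ≤ Mr - 2),
      mul_nonneg hMrpos.le (by linarith : (0:ℝ) ≤ Mr - 1),
      mul_nonneg hw0 hMrpos.le]
  have hLhalf : B*(sM1/(sπ*sk2*sb2)) ≤ sM/2 := by
    calc B*(sM1/(sπ*sk2*sb2)) ≤ T*(1+d) := le_trans hLE hET
      _ ≤ (sM/4)*(1+d) := mul_le_mul_of_nonneg_right hTle (by linarith)
      _ ≤ (sM/4)*2 := mul_le_mul_of_nonneg_left (by linarith [hd1]) (by linarith [hsMpos])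
      _ = sM/2 := by ring
  have hwle : (B*(sM1/(sπ*sk2*sb2)))*sN ≤ Mr := by
    calc (B*(sM1/(sπ*sk2*sb2)))*sN ≤ (sM/2)*sN := mul_le_mul_of_nonneg_right hLhalf hsNpos.le
      _ ≤ (sM/2)*(2*sM) := mul_le_mul_of_nonneg_left hsNle (by linarith)
      _ = sM^2 := by ring
      _ = Mr := hsMsq
  have hTLN : T ≤ B*(sM1/(sπ*sk2*sb2)) + 1/sN := by
    refine le_of_sq_le_sq' hTnonneg
      (by positivity) ?_
    have hpos : (0:ℝ) < sN^2*(4*Mr*(Mr-1)) := by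
      rw [hsNsq]
      exact mul_pos (by linarith) (mul_pos (by linarith) (by linarith))
    rw [← mul_le_mul_iff_of_pos_right hpos]
    have hexp : (B*(sM1/(sπ*sk2*sb2)) + 1/sN)*sN = (B*(sM1/(sπ*sk2*sb2)))*sN + 1 := by
      rw [add_mul, one_div, inv_mul_cancel₀ hsNpos.ne']
    calc T^2*(sN^2*(4*Mr*(Mr-1))) = (T^2*(4*Mr*(Mr-1)))*sN^2 := by ring
      _ = ((B*(sM1/(sπ*sk2*sb2)))^2*(2*Mr-1)^2)*sN^2 := by rw [heqTL]
      _ = ((B*(sM1/(sπ*sk2*sb2)))*sN)^2*(2*Mr-1)^2 := by ring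
      _ ≤ ((B*(sM1/(sπ*sk2*sb2)))*sN + 1)^2*(4*Mr*(Mr-1)) :=
          hsqkey _ (mul_nonneg hLnonneg hsNpos.le) hwle
      _ = ((B*(sM1/(sπ*sk2*sb2)) + 1/sN)*sN)^2*(4*Mr*(Mr-1)) := by rw [hexp]
      _ = (B*(sM1/(sπ*sk2*sb2)) + 1/sN)^2*(sN^2*(4*Mr*(Mr-1))) := by ring
  have hdown : T - B * (ck*cbb/cab) ≤ 8/ν/sN := by
    have h1N : (1:ℝ)/sN ≤ 8/ν/sN := by
      rw [div_div, div_le_div_iff₀ hsNpos (mul_pos hνpos hsNpos)]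
      nlinarith only [mul_le_mul_of_nonneg_right (show ν ≤ 8 by linarith) hsNpos.le]
    linarith only [hTLN, hLE, h1N]
  rw [abs_sub_le_iff]
  exact ⟨hup, hdown⟩

end
end
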